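/- arXiv:2307.06014 — 2 statements merged into one kernel-verified Lean document; each statement's English description precedes it below -/
import Mathlib

section
/- With the hypotheses of the previous statement (P_1,...,P_b ∈ L, Q_1,...,Q_b ∈ M distinct lines, R off both lines, L∩M not among the points, no collinear triple R,P_i,Q_j), the unique curve of degree b passing through P_1,...,P_b, Q_1,...,Q_b and having multiplicity at least b−1 at R is irreducible. -/
open MvPolynomial

noncomputable section

/-- The homogeneous ideal of a point of `ℙ²` with homogeneous coordinate vector `P`. -/
def pointIdeal (k : Type) [Field k] (P : Fin 3 → k) : Ideal (MvPolynomial (Fin 3) k) :=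
  Ideal.span {f : MvPolynomial (Fin 3) k | f.IsHomogeneous 1 ∧ eval P f = 0}

/-- The `t`-th symbolic power of the ideal of the point set `X` in `ℙ²`. -/
def symbolicPower (k : Type) [Field k] (X : Set (Fin 3 → k)) (t : ℕ) :
    Ideal (MvPolynomial (Fin 3) k) :=
  ⨅ P ∈ X, pointIdeal k P ^ t

/-- The initial degree `α(I)` of a (homogeneous) ideal: the least degree of a nonzero
homogeneous element of `I`. -/
def initDeg (k : Type) [Field k] (I : Ideal (MvPolynomial (Fin 3) k)) : ℕ :=
  sInf {d | ∃ f ∈ I, f ≠ 0 ∧ f.IsHomogeneous d}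

/-- `waldIs k X w` says that the Waldschmidt constant of `I_X` exists and equals `w`,
i.e. `α(I_X^{(t)})/t → w` as `t → ∞`. -/
def waldIs (k : Type) [Field k] (X : Set (Fin 3 → k)) (w : ℝ) : Prop :=
  Filter.Tendsto (fun t : ℕ => (initDeg k (symbolicPower k X t) : ℝ) / t)
    Filter.atTop (nhds w)

/-- Two vectors (or forms) define the same projective object. -/
def projEq (k : Type) [Field k] {M : Type*} [SMul k M] (x y : M) : Prop :=
  ∃ c : k, c ≠ 0 ∧ c • x = y

/-- A line in `ℙ²` is (the zero locus of) a nonzero linear form. -/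
def IsLine (k : Type) [Field k] (l : MvPolynomial (Fin 3) k) : Prop :=
  l ≠ 0 ∧ l.IsHomogeneous 1

/-- The point `P` lies on the line defined by the linear form `l`. -/
def onLine (k : Type) [Field k] (P : Fin 3 → k) (l : MvPolynomial (Fin 3) k) : Prop :=
  eval P l = 0

/-- Three points of `ℙ²` lie on a common line. -/
def collinear3 (k : Type) [Field k] (P Q R : Fin 3 → k) : Prop :=
  ∃ l, IsLine k l ∧ onLine k P l ∧ onLine k Q l ∧ onLine k R l

/-- The vectors in `X` are nonzero and represent pairwise distinct points of `ℙ²`. -/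
def goodPoints (k : Type) [Field k] (X : Set (Fin 3 → k)) : Prop :=
  (∀ P ∈ X, P ≠ 0) ∧ ∀ P ∈ X, ∀ Q ∈ X, P ≠ Q → ¬ projEq k P Q

/-- The degree-`d` part `[I]_d` of an ideal, as a `k`-vector space. -/
def degPart (k : Type) [Field k] (I : Ideal (MvPolynomial (Fin 3) k)) (d : ℕ) :
    Submodule k (MvPolynomial (Fin 3) k) :=
  (I.restrictScalars k) ⊓ homogeneousSubmodule (Fin 3) k d

/-- `n` points `[1 : j : h]`, `0 ≤ j ≤ n-1`, on the line `x₂ = h·x₀`. -/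
def stdRow (k : Type) [Field k] (h n : ℕ) : Set (Fin 3 → k) :=
  {P | ∃ j < n, P = ![1, (j : k), (h : k)]}

/-- A standard k-configuration of type `(a)`. -/
def std1 (k : Type) [Field k] (a : ℕ) : Set (Fin 3 → k) := stdRow k 0 a

/-- A standard k-configuration of type `(a, b)`. -/
def std2 (k : Type) [Field k] (a b : ℕ) : Set (Fin 3 → k) :=
  stdRow k 1 a ∪ stdRow k 0 b

/-- A standard k-configuration of type `(a, b, c)`. -/
def std3 (k : Type) [Field k] (a b c : ℕ) : Set (Fin 3 → k) :=
  stdRow k 2 a ∪ stdRow k 1 b ∪ stdRow k 0 c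

/-- The multiplicity of the curve `f = 0` at the point `P`. -/
def multAt (k : Type) [Field k] (P : Fin 3 → k) (f : MvPolynomial (Fin 3) k) : ℕ :=
  sSup {m | f ∈ pointIdeal k P ^ m}

namespace Aux
variable {k : Type} [Field k]

/-- support of a homogeneous polynomial in 3 variables -/
lemma homog_supp {f : MvPolynomial (Fin 3) k} {n : ℕ} (h : f.IsHomogeneous n) {d : Fin 3 →₀ ℕ}
    (hd : d ∈ f.support) : d 0 + d 1 + d 2 = n := by
  have := h (mem_support_iff.mp hd)
  change Finsupp.weight (fun _ => 1) d = n at this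
  rw [← Finsupp.degree_eq_weight_one] at this
  rw [show d.degree = d 0 + d 1 + d 2 from ?_] at this
  · exact this
  · rw [Finsupp.degree_apply, Finset.sum_subset (Finset.subset_univ d.support)]
    · simp [Fin.sum_univ_three]
    · intro x _ hx
      simpa using Finsupp.notMem_support_iff.mp hx

lemma homog_of_supp {f : MvPolynomial (Fin 3) k} {n : ℕ}
    (h : ∀ d ∈ f.support, d 0 + d 1 + d 2 = n) : f.IsHomogeneous n := by
  intro d hd
  change Finsupp.weight (fun _ => 1) d = n
  rw [← Finsupp.degree_eq_weight_one]
  have hd' : d ∈ f.support := mem_support_iff.mpr hd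
  rw [show d.degree = d 0 + d 1 + d 2 from ?_]
  · exact h d hd'
  · rw [Finsupp.degree_apply, Finset.sum_subset (Finset.subset_univ d.support)]
    · simp [Fin.sum_univ_three]
    · intro x _ hx
      simpa using Finsupp.notMem_support_iff.mp hx

lemma mon_expand (d : Fin 3 →₀ ℕ) (c : k) :
    (monomial d c : MvPolynomial (Fin 3) k) = C c * X 0 ^ d 0 * X 1 ^ d 1 * X 2 ^ d 2 := by
  rw [monomial_eq, Finsupp.prod_fintype]
  · simp [Fin.prod_univ_three, mul_assoc]
  · intro i; simp

lemma aeval_mon {A : Type*} [CommRing A] [Algebra k A] (v : Fin 3 → A) (d : Fin 3 →₀ ℕ) (c : k) :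
    aeval v (monomial d c) = algebraMap k A c * v 0 ^ d 0 * v 1 ^ d 1 * v 2 ^ d 2 := by
  rw [mon_expand]; simp

lemma eval_mon (v : Fin 3 → k) (d : Fin 3 →₀ ℕ) (c : k) :
    eval v (monomial d c) = c * v 0 ^ d 0 * v 1 ^ d 1 * v 2 ^ d 2 := by
  rw [mon_expand]; simp

/-- evaluation of a homogeneous polynomial at a scalar multiple -/
lemma eval_smul {f : MvPolynomial (Fin 3) k} {n : ℕ} (h : f.IsHomogeneous n) (r : k)
    (v : Fin 3 → k) : eval (r • v) f = r ^ n * eval v f := by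
  conv_lhs => rw [← support_sum_monomial_coeff f]
  conv_rhs => rw [← support_sum_monomial_coeff f]
  rw [map_sum, map_sum, Finset.mul_sum]
  apply Finset.sum_congr rfl
  intro d hd
  rw [eval_mon, eval_mon]
  have hsm : ∀ i : Fin 3, (r • v) i = r * v i := fun i => rfl
  rw [hsm, hsm, hsm, mul_pow, mul_pow, mul_pow, ← homog_supp h hd, pow_add, pow_add]
  ring

/-- classification of degree-1 monomials -/
lemma deg1_classify (m : Fin 3 →₀ ℕ) (h : m 0 + m 1 + m 2 = 1) :
    m = Finsupp.single 0 1 ∨ m = Finsupp.single 1 1 ∨ m = Finsupp.single 2 1 := by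
  have h0 := m 0; have h1 := m 1
  rcases Nat.lt_or_ge (m 0) 1 with h0 | h0
  · rcases Nat.lt_or_ge (m 1) 1 with h1 | h1
    · right; right
      ext i; fin_cases i <;> simp [Finsupp.single_apply] <;> omega
    · right; left
      ext i; fin_cases i <;> simp [Finsupp.single_apply] <;> omega
  · left
    ext i; fin_cases i <;> simp [Finsupp.single_apply] <;> omega

/-- a linear form is a combination of the variables -/
lemma lin_repr {p : MvPolynomial (Fin 3) k} (hp : p.IsHomogeneous 1) :
    p = C (coeff (Finsupp.single 0 1) p) * X 0 + C (coeff (Finsupp.single 1 1) p) * X 1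
      + C (coeff (Finsupp.single 2 1) p) * X 2 := by
  ext m
  simp only [coeff_add, coeff_C_mul, coeff_X']
  rcases Classical.em (m ∈ p.support) with hm | hm
  · rcases deg1_classify m (homog_supp hp hm) with h | h | h <;> subst h <;>
      simp [Finsupp.single_left_inj, Finsupp.single_injective, Finsupp.single_eq_single_iff]
  · have hz : coeff m p = 0 := notMem_support_iff.mp hm
    rw [hz]
    have : ∀ i : Fin 3, Finsupp.single i 1 = m → coeff (Finsupp.single i 1) p = 0 := by
      intro i hi; rw [hi, hz]
    by_cases e0 : Finsupp.single (0 : Fin 3) 1 = m <;>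
    by_cases e1 : Finsupp.single (1 : Fin 3) 1 = m <;>
    by_cases e2 : Finsupp.single (2 : Fin 3) 1 = m <;>
      simp [e0, e1, e2, this, hz]

lemma eval_lin {p : MvPolynomial (Fin 3) k} (hp : p.IsHomogeneous 1) (v : Fin 3 → k) :
    eval v p = coeff (Finsupp.single 0 1) p * v 0 + coeff (Finsupp.single 1 1) p * v 1
      + coeff (Finsupp.single 2 1) p * v 2 := by
  conv_lhs => rw [lin_repr hp]
  simp


/-- the grading-detecting map -/
def Phi : MvPolynomial (Fin 3) k →ₐ[k] Polynomial (MvPolynomial (Fin 3) k) :=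
  MvPolynomial.aeval (fun i => Polynomial.C (X i) * Polynomial.X)

open Polynomial in
lemma Phi_mon (d : Fin 3 →₀ ℕ) (c : k) :
    Phi (monomial d c : MvPolynomial (Fin 3) k)
      = Polynomial.C (monomial d c) * Polynomial.X ^ (d 0 + d 1 + d 2) := by
  rw [Phi, aeval_mon, mon_expand d c]
  simp only [map_mul, map_pow, Polynomial.algebraMap_apply, MvPolynomial.algebraMap_eq]
  rw [pow_add, pow_add]
  ring

lemma Phi_coeff (f : MvPolynomial (Fin 3) k) (j : ℕ) :
    (Phi f).coeff j
      = ∑ d ∈ f.support.filter (fun d => d 0 + d 1 + d 2 = j), monomial d (coeff d f) := by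
  classical
  conv_lhs => rw [← support_sum_monomial_coeff f]
  rw [map_sum, Polynomial.finset_sum_coeff, Finset.sum_filter]
  apply Finset.sum_congr rfl
  intro d _
  rw [Phi_mon, Polynomial.coeff_C_mul, Polynomial.coeff_X_pow]
  rcases eq_or_ne (d 0 + d 1 + d 2) j with h | h
  · simp [h]
  · simp [h, Ne.symm h]

lemma Phi_coeff_coeff (f : MvPolynomial (Fin 3) k) (d : Fin 3 →₀ ℕ) :
    coeff d ((Phi f).coeff (d 0 + d 1 + d 2)) = coeff d f := by
  classical
  rw [Phi_coeff, MvPolynomial.coeff_sum]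
  rcases Classical.em (d ∈ f.support) with hd | hd
  · have hmem : d ∈ f.support.filter (fun d' => d' 0 + d' 1 + d' 2 = d 0 + d 1 + d 2) :=
      Finset.mem_filter.mpr ⟨hd, rfl⟩
    rw [Finset.sum_eq_single_of_mem d hmem]
    · simp
    · intro d' _ hne
      simp [MvPolynomial.coeff_monomial, hne]
  · have h1 : coeff d f = 0 := notMem_support_iff.mp hd
    rw [h1]
    apply Finset.sum_eq_zero
    intro d' hd'
    have hne : d' ≠ d := by
      rintro rfl
      exact hd (Finset.mem_filter.mp hd').1
    simp [MvPolynomial.coeff_monomial, hne]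

lemma Phi_ne_zero {f : MvPolynomial (Fin 3) k} (hf : f ≠ 0) : (Phi f : Polynomial _) ≠ 0 := by
  obtain ⟨d, hd⟩ := exists_coeff_ne_zero hf
  intro h
  apply hd
  rw [← Phi_coeff_coeff f d, h]
  simp

lemma Phi_homog {f : MvPolynomial (Fin 3) k} {n : ℕ} (hf : f.IsHomogeneous n) :
    Phi f = Polynomial.C f * Polynomial.X ^ n := by
  conv_lhs => rw [← support_sum_monomial_coeff f]
  conv_rhs => rw [← support_sum_monomial_coeff f]
  rw [map_sum, map_sum, Finset.sum_mul]
  apply Finset.sum_congr rfl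
  intro d hd
  rw [Phi_mon, homog_supp hf hd]

lemma homog_of_Phi {f : MvPolynomial (Fin 3) k} {w : MvPolynomial (Fin 3) k} {n : ℕ}
    (h : Phi f = Polynomial.C w * Polynomial.X ^ n) : f.IsHomogeneous n := by
  apply homog_of_supp
  intro d hd
  by_contra hne
  have h1 : coeff d f ≠ 0 := mem_support_iff.mp hd
  apply h1
  rw [← Phi_coeff_coeff f d, h, Polynomial.coeff_C_mul, Polynomial.coeff_X_pow,
    if_neg hne]
  simp

lemma poly_mono_of_deg_eq {R : Type*} [CommRing R] [IsDomain R] {p : Polynomial R}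
    (h : p.natDegree = p.natTrailingDegree) :
    p = Polynomial.C (p.coeff p.natDegree) * Polynomial.X ^ p.natDegree := by
  ext i
  rw [Polynomial.coeff_C_mul, Polynomial.coeff_X_pow]
  rcases lt_trichotomy i p.natDegree with hi | hi | hi
  · rw [if_neg hi.ne, Polynomial.coeff_eq_zero_of_lt_natTrailingDegree (h ▸ hi)]
    simp
  · simp [hi]
  · rw [if_neg hi.ne', Polynomial.coeff_eq_zero_of_natDegree_lt hi]
    simp

/-- factors of a homogeneous polynomial are homogeneous -/
lemma homog_factors {f g : MvPolynomial (Fin 3) k} {n : ℕ} (hf : f ≠ 0) (hg : g ≠ 0)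
    (h : (f * g).IsHomogeneous n) :
    ∃ a b : ℕ, a + b = n ∧ f.IsHomogeneous a ∧ g.IsHomogeneous b := by
  have hPhi : Phi f * Phi g = Polynomial.C (f * g) * Polynomial.X ^ n := by
    rw [← map_mul, Phi_homog h]
  have hf' : (Phi f : Polynomial _) ≠ 0 := Phi_ne_zero hf
  have hg' : (Phi g : Polynomial _) ≠ 0 := Phi_ne_zero hg
  have hfg : f * g ≠ 0 := mul_ne_zero hf hg
  have hdeg : (Phi f).natDegree + (Phi g).natDegree = n := by
    have h2 := Polynomial.natDegree_mul hf' hg'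
    rw [hPhi, Polynomial.natDegree_C_mul_X_pow _ _ hfg] at h2
    omega
  have htr : (Phi f).natTrailingDegree + (Phi g).natTrailingDegree = n := by
    have h3 : (Polynomial.C (f*g) * Polynomial.X ^ n).natTrailingDegree = n := by
      rw [Polynomial.C_mul_X_pow_eq_monomial, Polynomial.natTrailingDegree_monomial hfg]
    have h2 := Polynomial.natTrailingDegree_mul hf' hg'
    rw [hPhi, h3] at h2
    omega
  have h1 : (Phi f).natTrailingDegree ≤ (Phi f).natDegree :=
    Polynomial.natTrailingDegree_le_natDegree _
  have h2 : (Phi g).natTrailingDegree ≤ (Phi g).natDegree :=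
    Polynomial.natTrailingDegree_le_natDegree _
  have e1 : (Phi f).natDegree = (Phi f).natTrailingDegree := by omega
  have e2 : (Phi g).natDegree = (Phi g).natTrailingDegree := by omega
  exact ⟨(Phi f).natDegree, (Phi g).natDegree, hdeg,
    homog_of_Phi (poly_mono_of_deg_eq e1), homog_of_Phi (poly_mono_of_deg_eq e2)⟩


/-! ### Dehomogenization machinery -/

/-- dehomogenization along the line `{x₀ = 0}` (parametrized by `(0,1,t)`) -/
def piP : MvPolynomial (Fin 3) k →ₐ[k] Polynomial k :=
  MvPolynomial.aeval ![0, 1, Polynomial.X]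

/-- dehomogenization along the line parametrized by `(γ,1,t)` -/
def piQ (γ : k) : MvPolynomial (Fin 3) k →ₐ[k] Polynomial k :=
  MvPolynomial.aeval ![Polynomial.C γ, 1, Polynomial.X]

lemma eval_piP (t : k) (f : MvPolynomial (Fin 3) k) :
    (piP f).eval t = eval ![0, 1, t] f := by
  have h : (Polynomial.evalRingHom t).comp (piP (k := k)).toRingHom
      = (MvPolynomial.eval ![0, 1, t]) := by
    apply MvPolynomial.ringHom_ext
    · intro a; simp [piP]
    · intro i; fin_cases i <;> simp [piP]
  exact RingHom.congr_fun h f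

lemma eval_piQ (γ t : k) (f : MvPolynomial (Fin 3) k) :
    ((piQ γ) f).eval t = eval ![γ, 1, t] f := by
  have h : (Polynomial.evalRingHom t).comp (piQ γ (k := k)).toRingHom
      = (MvPolynomial.eval ![γ, 1, t]) := by
    apply MvPolynomial.ringHom_ext
    · intro a; simp [piQ]
    · intro i; fin_cases i <;> simp [piQ]
  exact RingHom.congr_fun h f

lemma free_iff_supp {p : MvPolynomial (Fin 3) k} :
    degreeOf 0 p = 0 ↔ ∀ d ∈ p.support, d 0 = 0 := by
  rw [← Nat.le_zero, degreeOf_le_iff]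
  simp [Nat.le_zero]

lemma piQ_eq_piP_of_free {γ : k} {p : MvPolynomial (Fin 3) k} (hp : degreeOf 0 p = 0) :
    piQ γ p = piP p := by
  conv_lhs => rw [← support_sum_monomial_coeff p]
  conv_rhs => rw [← support_sum_monomial_coeff p]
  rw [map_sum, map_sum]
  apply Finset.sum_congr rfl
  intro d hd
  rw [piP, piQ, aeval_mon, aeval_mon, free_iff_supp.mp hp d hd]
  simp

lemma piP_coeff_of_free {p : MvPolynomial (Fin 3) k} {n : ℕ} (hfree : degreeOf 0 p = 0)
    (hp : p.IsHomogeneous n) (d : Fin 3 →₀ ℕ) (hd : d ∈ p.support) :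
    (piP p).coeff (d 2) = coeff d p := by
  classical
  conv_lhs => rw [← support_sum_monomial_coeff p]
  rw [map_sum, Polynomial.finset_sum_coeff]
  rw [Finset.sum_eq_single_of_mem d hd]
  · rw [piP, aeval_mon, free_iff_supp.mp hfree d hd]
    simp
  · intro d' hd' hne
    have hne2 : d' 2 ≠ d 2 := by
      intro he
      apply hne
      have e1 := homog_supp hp hd'
      have e2 := homog_supp hp hd
      have z1 := free_iff_supp.mp hfree d' hd'
      have z2 := free_iff_supp.mp hfree d hd
      have h01 : d' 1 = d 1 := by omega
      have h00 : d' 0 = d 0 := by omega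
      ext i
      fin_cases i
      · exact h00
      · exact h01
      · exact he
    rw [piP, aeval_mon, free_iff_supp.mp hfree d' hd']
    simp [hne2, Ne.symm hne2]

lemma piP_ne_zero_of_free {p : MvPolynomial (Fin 3) k} {n : ℕ} (hfree : degreeOf 0 p = 0)
    (hp : p.IsHomogeneous n) (h0 : p ≠ 0) : piP p ≠ 0 := by
  obtain ⟨d, hd⟩ := exists_coeff_ne_zero h0
  have hds : d ∈ p.support := mem_support_iff.mpr hd
  intro h
  apply hd
  rw [← piP_coeff_of_free hfree hp d hds, h]
  simp

lemma degOf0_mul {f g : MvPolynomial (Fin 3) k} (hf : f ≠ 0) (hg : g ≠ 0) :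
    degreeOf 0 (f * g) = degreeOf 0 f + degreeOf 0 g := by
  have h1 : finSuccEquiv k 2 f ≠ 0 := by
    intro h
    exact hf ((finSuccEquiv k 2).injective (by simp [h]))
  have h2 : finSuccEquiv k 2 g ≠ 0 := by
    intro h
    exact hg ((finSuccEquiv k 2).injective (by simp [h]))
  rw [← natDegree_finSuccEquiv, ← natDegree_finSuccEquiv, ← natDegree_finSuccEquiv,
    map_mul, Polynomial.natDegree_mul h1 h2]

/-- support bound for elements of powers of `(X 1, X 2)` -/
lemma span_pair_supp {p : MvPolynomial (Fin 3) k}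
    (hp : p ∈ Ideal.span {(X 1 : MvPolynomial (Fin 3) k), X 2}) :
    ∀ d ∈ p.support, 1 ≤ d 1 + d 2 := by
  classical
  obtain ⟨u, v, huv⟩ := Ideal.mem_span_pair.mp hp
  intro d hd
  rw [← huv] at hd
  have hd2 := MvPolynomial.support_add hd
  rcases Finset.mem_union.mp hd2 with h | h
  · have := MvPolynomial.support_mul _ _ h
    obtain ⟨a, ha, b, hb, rfl⟩ := Finset.mem_add.mp this
    have : b = Finsupp.single 1 1 := by
      have := MvPolynomial.support_X (R := k) (n := (1 : Fin 3)) ▸ hb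
      simpa using this
    subst this
    simp only [Finsupp.add_apply, Finsupp.single_apply]
    split_ifs <;> omega
  · have := MvPolynomial.support_mul _ _ h
    obtain ⟨a, ha, b, hb, rfl⟩ := Finset.mem_add.mp this
    have : b = Finsupp.single 2 1 := by
      have := MvPolynomial.support_X (R := k) (n := (2 : Fin 3)) ▸ hb
      simpa using this
    subst this
    simp only [Finsupp.add_apply, Finsupp.single_apply]
    split_ifs <;> omega

lemma span_pair_pow_supp {m : ℕ} {p : MvPolynomial (Fin 3) k}
    (hp : p ∈ (Ideal.span {(X 1 : MvPolynomial (Fin 3) k), X 2}) ^ m) :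
    ∀ d ∈ p.support, m ≤ d 1 + d 2 := by
  classical
  induction m generalizing p with
  | zero => intro d hd; exact Nat.zero_le _
  | succ m ih =>
    rw [pow_succ] at hp
    refine Submodule.mul_induction_on hp ?_ ?_
    · intro a ha b hb d hd
      have := MvPolynomial.support_mul _ _ hd
      obtain ⟨u, hu, v, hv, rfl⟩ := Finset.mem_add.mp this
      have l1 := ih ha u hu
      have l2 := span_pair_supp hb v hv
      simp only [Finsupp.add_apply]
      omega
    · intro x y hx hy d hd
      rcases Finset.mem_union.mp (MvPolynomial.support_add hd) with h | h
      · exact hx d h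
      · exact hy d h

/-! ### substitution `x₀ ↦ 0` and divisibility by `x₀` -/

def z0 : MvPolynomial (Fin 3) k →ₐ[k] MvPolynomial (Fin 3) k :=
  MvPolynomial.aeval ![0, X 1, X 2]

lemma X0_dvd_sub (p : MvPolynomial (Fin 3) k) : (X 0 : MvPolynomial (Fin 3) k) ∣ p - z0 p := by
  induction p using MvPolynomial.induction_on with
  | C a => simp [z0]
  | add p q hp hq =>
    have : p + q - z0 (p + q) = (p - z0 p) + (q - z0 q) := by
      rw [map_add]; ring
    rw [this]
    exact dvd_add hp hq
  | mul_X p i hp =>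
    fin_cases i
    · show (X 0 : MvPolynomial (Fin 3) k) ∣ p * X 0 - z0 (p * X 0)
      have : p * X 0 - z0 (p * X 0) = p * X 0 := by
        rw [map_mul, show z0 (X (0:Fin 3)) = 0 by simp [z0]]
        ring
      rw [this]
      exact dvd_mul_left _ _
    · show (X 0 : MvPolynomial (Fin 3) k) ∣ p * X 1 - z0 (p * X 1)
      have : p * X 1 - z0 (p * X 1) = (p - z0 p) * X 1 := by
        rw [map_mul, show z0 (X (1:Fin 3)) = X 1 by simp [z0]]
        ring
      rw [this]
      exact hp.mul_right _
    · show (X 0 : MvPolynomial (Fin 3) k) ∣ p * X 2 - z0 (p * X 2)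
      have : p * X 2 - z0 (p * X 2) = (p - z0 p) * X 2 := by
        rw [map_mul, show z0 (X (2:Fin 3)) = X 2 by simp [z0]]
        ring
      rw [this]
      exact hp.mul_right _

lemma z0_free (p : MvPolynomial (Fin 3) k) : degreeOf 0 (z0 p) = 0 := by
  induction p using MvPolynomial.induction_on with
  | C a => simp [z0, degreeOf_C]
  | add p q hp hq =>
    rw [map_add]
    have := degreeOf_add_le 0 (z0 p) (z0 q)
    omega
  | mul_X p i hp =>
    have hX1 : degreeOf 0 (X 1 : MvPolynomial (Fin 3) k) = 0 := by
      rw [degreeOf_X]; simp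
    have hX2 : degreeOf 0 (X 2 : MvPolynomial (Fin 3) k) = 0 := by
      rw [degreeOf_X]; simp
    fin_cases i
    · show degreeOf 0 (z0 (p * X 0)) = 0
      rw [map_mul, show z0 (X (0:Fin 3)) = 0 by simp [z0]]
      simp
    · show degreeOf 0 (z0 (p * X 1)) = 0
      rw [map_mul, show z0 (X (1:Fin 3)) = X 1 by simp [z0]]
      have h2 := degreeOf_mul_le 0 (z0 p) (X 1)
      omega
    · show degreeOf 0 (z0 (p * X 2)) = 0
      rw [map_mul, show z0 (X (2:Fin 3)) = X 2 by simp [z0]]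
      have h2 := degreeOf_mul_le 0 (z0 p) (X 2)
      omega

lemma piP_z0 (p : MvPolynomial (Fin 3) k) : piP (z0 p) = piP p := by
  have h : (piP (k := k)).comp z0 = piP := by
    apply MvPolynomial.algHom_ext
    intro i; fin_cases i <;> simp [piP, z0]
  exact AlgHom.congr_fun h p

lemma z0_homog {p : MvPolynomial (Fin 3) k} {n : ℕ} (hp : p.IsHomogeneous n) :
    (z0 p).IsHomogeneous n := by
  have := hp.aeval (g := (![0, X 1, X 2] : Fin 3 → MvPolynomial (Fin 3) k)) (n := 1) ?_
  · rw [one_mul] at this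
    unfold z0
    exact this
  · intro i; fin_cases i
    · exact isHomogeneous_zero _ _ _
    · exact isHomogeneous_X _ _
    · exact isHomogeneous_X _ _

lemma X0_dvd_of_piP_eq_zero {p : MvPolynomial (Fin 3) k} {n : ℕ} (hp : p.IsHomogeneous n)
    (h : piP p = 0) : (X 0 : MvPolynomial (Fin 3) k) ∣ p := by
  have hz : z0 p = 0 := by
    by_contra hz
    exact piP_ne_zero_of_free (z0_free p) (z0_homog hp) hz (by rw [piP_z0, h])
  have := X0_dvd_sub p
  rwa [hz, sub_zero] at this

/-! ### shear substitutions -/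

def tauP (γ : k) : MvPolynomial (Fin 3) k →ₐ[k] MvPolynomial (Fin 3) k :=
  MvPolynomial.aeval ![X 0 + C γ * X 1, X 1, X 2]

def tauM (γ : k) : MvPolynomial (Fin 3) k →ₐ[k] MvPolynomial (Fin 3) k :=
  MvPolynomial.aeval ![X 0 - C γ * X 1, X 1, X 2]

lemma tauM_tauP (γ : k) (p : MvPolynomial (Fin 3) k) : tauM γ (tauP γ p) = p := by
  have h : (tauM γ).comp (tauP γ) = AlgHom.id k (MvPolynomial (Fin 3) k) := by
    apply MvPolynomial.algHom_ext
    intro i; fin_cases i <;> simp [tauM, tauP]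
  exact AlgHom.congr_fun h p

lemma piQ_eq_piP_tauP (γ : k) (p : MvPolynomial (Fin 3) k) : piQ γ p = piP (tauP γ p) := by
  have h : (piP (k := k)).comp (tauP γ) = piQ γ := by
    apply MvPolynomial.algHom_ext
    intro i; fin_cases i <;> simp [piP, piQ, tauP]
  exact (AlgHom.congr_fun h p).symm

lemma tauP_homog {γ : k} {p : MvPolynomial (Fin 3) k} {n : ℕ} (hp : p.IsHomogeneous n) :
    (tauP γ p).IsHomogeneous n := by
  have := hp.aeval (g := (![X 0 + C γ * X 1, X 1, X 2] : Fin 3 → MvPolynomial (Fin 3) k)) (n := 1) ?_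
  · rw [one_mul] at this
    unfold tauP
    exact this
  · intro i; fin_cases i
    · exact ((isHomogeneous_X _ _).add (isHomogeneous_C_mul_X _ _))
    · exact isHomogeneous_X _ _
    · exact isHomogeneous_X _ _

lemma line_dvd_of_piQ_eq_zero {γ : k} {p : MvPolynomial (Fin 3) k} {n : ℕ}
    (hp : p.IsHomogeneous n) (h : piQ γ p = 0) :
    (X 0 - C γ * X 1 : MvPolynomial (Fin 3) k) ∣ p := by
  have h1 : (X 0 : MvPolynomial (Fin 3) k) ∣ tauP γ p :=
    X0_dvd_of_piP_eq_zero (tauP_homog hp) (by rw [← piQ_eq_piP_tauP]; exact h)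
  have h2 := map_dvd (tauM γ) h1
  rw [tauM_tauP] at h2
  have h3 : tauM γ (X 0) = X 0 - C γ * X 1 := by simp [tauM]
  rwa [h3] at h2

/-! ### degree bound for dehomogenizations -/

lemma natDegree_aeval_le {v : Fin 3 → Polynomial k} (hv : ∀ i, (v i).natDegree ≤ 1)
    {p : MvPolynomial (Fin 3) k} {n : ℕ} (hp : p.IsHomogeneous n) :
    (MvPolynomial.aeval v p).natDegree ≤ n := by
  conv_lhs => rw [← support_sum_monomial_coeff p]
  rw [map_sum]
  apply Polynomial.natDegree_sum_le_of_forall_le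
  intro d hd
  rw [aeval_mon]
  refine le_trans (Polynomial.natDegree_mul_le) (le_trans (add_le_add
    (le_trans (Polynomial.natDegree_mul_le) (le_trans (add_le_add
      (le_trans (Polynomial.natDegree_mul_le) (le_trans (add_le_add
        (le_of_eq (Polynomial.natDegree_C _))
        (le_trans (Polynomial.natDegree_pow_le)
          (Nat.mul_le_mul_left _ (hv 0)))) (by omega : 0 + d 0 * 1 ≤ d 0)))
      (le_trans (Polynomial.natDegree_pow_le) (Nat.mul_le_mul_left _ (hv 1))))
      (by omega : d 0 + d 1 * 1 ≤ d 0 + d 1)))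
    (le_trans (Polynomial.natDegree_pow_le) (Nat.mul_le_mul_left _ (hv 2)))) ?_)
  have := homog_supp hp hd
  omega

lemma natDegree_piP_le {p : MvPolynomial (Fin 3) k} {n : ℕ} (hp : p.IsHomogeneous n) :
    (piP p).natDegree ≤ n := by
  apply natDegree_aeval_le _ hp
  intro i; fin_cases i <;> simp

lemma natDegree_piQ_le {γ : k} {p : MvPolynomial (Fin 3) k} {n : ℕ} (hp : p.IsHomogeneous n) :
    ((piQ γ) p).natDegree ≤ n := by
  apply natDegree_aeval_le _ hp
  intro i; fin_cases i <;> simp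


/-! ### units -/

lemma homog_zero_eq_C {g : MvPolynomial (Fin 3) k} (h : g.IsHomogeneous 0) :
    g = C (coeff 0 g) := by
  ext d
  rcases eq_or_ne d 0 with rfl | hd
  · simp
  · rw [coeff_C, if_neg (Ne.symm hd)]
    by_contra hc
    have hds : d ∈ g.support := mem_support_iff.mpr hc
    have h3 := homog_supp h hds
    apply hd
    ext i
    fin_cases i <;> simp <;> omega

lemma isUnit_of_homog_zero {g : MvPolynomial (Fin 3) k} (hg : g ≠ 0) (h : g.IsHomogeneous 0) :
    IsUnit g := by
  rw [homog_zero_eq_C h]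
  have : coeff 0 g ≠ 0 := by
    intro hc
    apply hg
    rw [homog_zero_eq_C h, hc, map_zero]
  exact (IsUnit.mk0 _ this).map (C : k →+* MvPolynomial (Fin 3) k)

lemma not_isUnit_of_homog {f : MvPolynomial (Fin 3) k} {b : ℕ} (hf : f ≠ 0)
    (h : f.IsHomogeneous b) (hb : 0 < b) : ¬ IsUnit f := by
  intro hu
  obtain ⟨u, hu1⟩ := IsUnit.exists_right_inv hu
  have hune : u ≠ 0 := by
    rintro rfl
    rw [mul_zero] at hu1
    exact (zero_ne_one (α := MvPolynomial (Fin 3) k)) hu1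
  obtain ⟨p, q, hpq, hp, _⟩ := homog_factors hf hune (by rw [hu1]; exact isHomogeneous_one _ _)
  have : b = p := h.inj_right hp hf
  omega

/-! ### the key counting lemma -/

lemma one_le_degreeOf_of_mem {p : MvPolynomial (Fin 3) k} {d : Fin 3 →₀ ℕ} (hd : d ∈ p.support)
    {i : Fin 3} (h : 1 ≤ d i) : 1 ≤ degreeOf i p := by
  rw [degreeOf_eq_sup]
  exact le_trans h (Finset.le_sup (f := fun m => m i) hd)

lemma coreAux {b : ℕ} (hb : 0 < b) {γ : k} (hγ : γ ≠ 0) {a bq : Fin b → k}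
    (ha : Function.Injective a) (hbq : Function.Injective bq) (hab : ∀ i j, a i ≠ bq j)
    {g h : MvPolynomial (Fin 3) k} (hg0 : g ≠ 0) (hh0 : h ≠ 0)
    {s t : ℕ} (hs : 1 ≤ s) (ht : 1 ≤ t) (hst : s + t = b)
    (hgh : g.IsHomogeneous s) (hhh : h.IsHomogeneous t)
    (hd1 : degreeOf 0 g + degreeOf 0 h ≤ 1) (hfree : degreeOf 0 g = 0)
    (hPa : ∀ i, Polynomial.eval (a i) (piP (g * h)) = 0)
    (hQb : ∀ j, Polynomial.eval (bq j) (piQ γ (g * h)) = 0) : False := by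
  classical
  set G : Polynomial k := piP g with hGdef
  have hGQ : piQ γ g = G := piQ_eq_piP_of_free hfree
  have hG0 : G ≠ 0 := piP_ne_zero_of_free hfree hgh hg0
  have hGdeg : G.natDegree ≤ s := natDegree_piP_le hgh
  by_cases hH : piP h = 0
  · -- `x₀` divides `h`
    obtain ⟨h₁, rfl⟩ := X0_dvd_of_piP_eq_zero hhh hH
    have hh₁0 : h₁ ≠ 0 := by rintro rfl; simp at hh0
    have hX0 : (X 0 : MvPolynomial (Fin 3) k) ≠ 0 := X_ne_zero 0
    obtain ⟨p, q, hpq, hp, hq⟩ := homog_factors hX0 hh₁0 hhh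
    have hp1 : p = 1 := ((isHomogeneous_X k (0 : Fin 3)).inj_right hp hX0).symm
    have hqh : h₁.IsHomogeneous (t - 1) := by
      have : q = t - 1 := by omega
      rwa [← this]
    have hdX : degreeOf 0 (X 0 * h₁ : MvPolynomial (Fin 3) k) = 1 + degreeOf 0 h₁ := by
      rw [degOf0_mul hX0 hh₁0, degreeOf_X]
      simp
    have hfree₁ : degreeOf 0 h₁ = 0 := by omega
    have hfreegh : degreeOf 0 (g * h₁) = 0 := by
      rw [degOf0_mul hg0 hh₁0, hfree, hfree₁]
    have hghhom : (g * h₁).IsHomogeneous (b - 1) := by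
      have := hgh.mul hqh
      rwa [show s + (t - 1) = b - 1 by omega] at this
    set W := piP (g * h₁) with hWdef
    have hW0 : W ≠ 0 := piP_ne_zero_of_free hfreegh hghhom (mul_ne_zero hg0 hh₁0)
    have hWdeg : W.natDegree ≤ b - 1 := natDegree_piP_le hghhom
    have hWroots : ∀ j, W.eval (bq j) = 0 := by
      intro j
      have h1 := hQb j
      have h2 : piQ γ (g * (X 0 * h₁)) = Polynomial.C γ * W := by
        rw [show g * (X 0 * h₁) = X 0 * (g * h₁) by ring, map_mul,
          show piQ γ (X 0 : MvPolynomial (Fin 3) k) = Polynomial.C γ by simp [piQ],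
          piQ_eq_piP_of_free hfreegh]
      rw [h2] at h1
      simpa [hγ] using h1
    have := Polynomial.eq_zero_of_natDegree_lt_card_of_eval_eq_zero W hbq hWroots
      (by rw [Fintype.card_fin]; omega)
    exact hW0 this
  · by_cases hH' : piQ γ h = 0
    · -- `x₀ - γ x₁` divides `h`
      obtain ⟨h₁, rfl⟩ := line_dvd_of_piQ_eq_zero hhh hH'
      set L : MvPolynomial (Fin 3) k := X 0 - C γ * X 1 with hLdef
      have hpiPL : piP L = Polynomial.C (-γ) := by
        simp [piP, hLdef]
      have hL0 : L ≠ 0 := by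
        intro hL
        rw [hL, map_zero] at hpiPL
        exact hγ (by simpa using hpiPL.symm)
      have hLhom : L.IsHomogeneous 1 :=
        (isHomogeneous_X k (0 : Fin 3)).sub (isHomogeneous_C_mul_X γ (1 : Fin 3))
      have hh₁0 : h₁ ≠ 0 := by rintro rfl; simp at hh0
      obtain ⟨p, q, hpq, hp, hq⟩ := homog_factors hL0 hh₁0 hhh
      have hp1 : p = 1 := (hLhom.inj_right hp hL0).symm
      have hqh : h₁.IsHomogeneous (t - 1) := by
        have : q = t - 1 := by omega
        rwa [← this]
      have hdL : 1 ≤ degreeOf 0 L := by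
        apply one_le_degreeOf_of_mem (d := Finsupp.single 0 1)
        · rw [mem_support_iff, hLdef]
          simp [coeff_X', MvPolynomial.coeff_C_mul, Finsupp.single_eq_single_iff]
        · simp
      have hdX : degreeOf 0 (L * h₁) = degreeOf 0 L + degreeOf 0 h₁ :=
        degOf0_mul hL0 hh₁0
      have hfree₁ : degreeOf 0 h₁ = 0 := by omega
      have hfreegh : degreeOf 0 (g * h₁) = 0 := by
        rw [degOf0_mul hg0 hh₁0, hfree, hfree₁]
      have hghhom : (g * h₁).IsHomogeneous (b - 1) := by
        have := hgh.mul hqh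
        rwa [show s + (t - 1) = b - 1 by omega] at this
      set W := piP (g * h₁) with hWdef
      have hW0 : W ≠ 0 := piP_ne_zero_of_free hfreegh hghhom (mul_ne_zero hg0 hh₁0)
      have hWdeg : W.natDegree ≤ b - 1 := natDegree_piP_le hghhom
      have hWroots : ∀ i, W.eval (a i) = 0 := by
        intro i
        have h1 := hPa i
        have h2 : piP (g * (L * h₁)) = Polynomial.C (-γ) * W := by
          rw [show g * (L * h₁) = L * (g * h₁) by ring, map_mul, hpiPL]
        rw [h2, Polynomial.eval_mul, Polynomial.eval_C] at h1
        rcases mul_eq_zero.mp h1 with hc | hc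
        · exact absurd hc (neg_ne_zero.mpr hγ)
        · exact hc
      have := Polynomial.eq_zero_of_natDegree_lt_card_of_eval_eq_zero W ha hWroots
        (by rw [Fintype.card_fin]; omega)
      exact hW0 this
    · -- counting case
      set A : Finset (Fin b) := Finset.univ.filter (fun i => G.eval (a i) = 0) with hAdef
      set B : Finset (Fin b) := Finset.univ.filter (fun j => G.eval (bq j) = 0) with hBdef
      have hcardA : s ≤ A.card := by
        have hsub : Aᶜ.image a ⊆ (piP h).roots.toFinset := by
          intro x hx
          obtain ⟨i, hi, rfl⟩ := Finset.mem_image.mp hx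
          have hiA : G.eval (a i) ≠ 0 := by
            intro hz
            rw [Finset.mem_compl, hAdef] at hi
            exact hi (Finset.mem_filter.mpr ⟨Finset.mem_univ _, hz⟩)
          have h1 := hPa i
          rw [map_mul, Polynomial.eval_mul] at h1
          have h2 : (piP h).eval (a i) = 0 := by
            rcases mul_eq_zero.mp h1 with h | h
            · exact absurd h hiA
            · exact h
          rw [Multiset.mem_toFinset, Polynomial.mem_roots']
          exact ⟨hH, h2⟩
        have h1 : Aᶜ.card ≤ (piP h).roots.toFinset.card := by
          rw [← Finset.card_image_of_injective Aᶜ ha]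
          exact Finset.card_le_card hsub
        have h2 : (piP h).roots.toFinset.card ≤ t := by
          refine le_trans (Multiset.toFinset_card_le _) (le_trans (Polynomial.card_roots' _)
            (natDegree_piP_le hhh))
        have h3 : Aᶜ.card = b - A.card := by
          rw [Finset.card_compl, Fintype.card_fin]
        have h4 : A.card ≤ b := by simpa using Finset.card_le_univ A
        omega
      have hcardB : s ≤ B.card := by
        have hsub : Bᶜ.image bq ⊆ (piQ γ h).roots.toFinset := by
          intro x hx
          obtain ⟨j, hj, rfl⟩ := Finset.mem_image.mp hx
          have hjB : G.eval (bq j) ≠ 0 := by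
            intro hz
            rw [Finset.mem_compl, hBdef] at hj
            exact hj (Finset.mem_filter.mpr ⟨Finset.mem_univ _, hz⟩)
          have h1 := hQb j
          rw [map_mul, hGQ, Polynomial.eval_mul] at h1
          have h2 : ((piQ γ) h).eval (bq j) = 0 := by
            rcases mul_eq_zero.mp h1 with h | h
            · exact absurd h hjB
            · exact h
          rw [Multiset.mem_toFinset, Polynomial.mem_roots']
          exact ⟨hH', h2⟩
        have h1 : Bᶜ.card ≤ ((piQ γ) h).roots.toFinset.card := by
          rw [← Finset.card_image_of_injective Bᶜ hbq]
          exact Finset.card_le_card hsub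
        have h2 : ((piQ γ) h).roots.toFinset.card ≤ t := by
          refine le_trans (Multiset.toFinset_card_le _) (le_trans (Polynomial.card_roots' _)
            (natDegree_piQ_le hhh))
        have h3 : Bᶜ.card = b - B.card := by
          rw [Finset.card_compl, Fintype.card_fin]
        have h4 : B.card ≤ b := by simpa using Finset.card_le_univ B
        omega
      have hABcard : A.card + B.card ≤ s := by
        have hsub : A.image a ∪ B.image bq ⊆ G.roots.toFinset := by
          intro x hx
          rw [Multiset.mem_toFinset, Polynomial.mem_roots']
          rcases Finset.mem_union.mp hx with hx | hx
          · obtain ⟨i, hi, rfl⟩ := Finset.mem_image.mp hx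
            rw [hAdef] at hi
            exact ⟨hG0, (Finset.mem_filter.mp hi).2⟩
          · obtain ⟨j, hj, rfl⟩ := Finset.mem_image.mp hx
            rw [hBdef] at hj
            exact ⟨hG0, (Finset.mem_filter.mp hj).2⟩
        have hdisj : Disjoint (A.image a) (B.image bq) := by
          rw [Finset.disjoint_left]
          intro x hx hx'
          obtain ⟨i, _, rfl⟩ := Finset.mem_image.mp hx
          obtain ⟨j, _, hj2⟩ := Finset.mem_image.mp hx'
          exact hab i j hj2.symm
        have h1 : A.card + B.card = (A.image a ∪ B.image bq).card := by
          rw [Finset.card_union_of_disjoint hdisj, Finset.card_image_of_injective _ ha,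
            Finset.card_image_of_injective _ hbq]
        rw [h1]
        refine le_trans (Finset.card_le_card hsub) (le_trans (Multiset.toFinset_card_le _)
          (le_trans (Polynomial.card_roots' _) hGdeg))
      omega

/-- the core irreducibility criterion, in normalized coordinates -/
lemma core {b : ℕ} (hb : 0 < b) {γ : k} (hγ : γ ≠ 0) {a bq : Fin b → k}
    (ha : Function.Injective a) (hbq : Function.Injective bq) (hab : ∀ i j, a i ≠ bq j)
    {f : MvPolynomial (Fin 3) k} (hf0 : f ≠ 0) (hfh : f.IsHomogeneous b)
    (hsupp : ∀ d ∈ f.support, b - 1 ≤ d 1 + d 2)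
    (hPa : ∀ i, eval ![0, 1, a i] f = 0) (hQb : ∀ j, eval ![γ, 1, bq j] f = 0) :
    Irreducible f := by
  constructor
  · exact not_isUnit_of_homog hf0 hfh hb
  · rintro g h rfl
    have hg0 : g ≠ 0 := by rintro rfl; simp at hf0
    have hh0 : h ≠ 0 := by rintro rfl; simp at hf0
    obtain ⟨s, t, hst, hgh, hhh⟩ := homog_factors hg0 hh0 hfh
    rcases Nat.eq_zero_or_pos s with hs | hs
    · subst hs
      exact Or.inl (isUnit_of_homog_zero hg0 hgh)
    rcases Nat.eq_zero_or_pos t with ht | ht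
    · subst ht
      exact Or.inr (isUnit_of_homog_zero hh0 hhh)
    exfalso
    have hd1 : degreeOf 0 g + degreeOf 0 h ≤ 1 := by
      rw [← degOf0_mul hg0 hh0]
      rw [degreeOf_le_iff]
      intro d hd
      have h1 := homog_supp hfh hd
      have h2 := hsupp d hd
      omega
    have hPa' : ∀ i, Polynomial.eval (a i) (piP (g * h)) = 0 := by
      intro i; rw [eval_piP]; exact hPa i
    have hQb' : ∀ j, Polynomial.eval (bq j) (piQ γ (g * h)) = 0 := by
      intro j; rw [eval_piQ]; exact hQb j
    rcases Nat.eq_zero_or_pos (degreeOf 0 g) with hfree | hpos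
    · exact coreAux hb hγ ha hbq hab hg0 hh0 hs ht hst hgh hhh hd1 hfree hPa' hQb'
    · have hfree : degreeOf 0 h = 0 := by omega
      have hcomm : g * h = h * g := mul_comm g h
      rw [hcomm] at hPa' hQb'
      exact coreAux hb hγ ha hbq hab hh0 hg0 ht hs (by omega) hhh hgh (by omega) hfree hPa' hQb'


/-! ### linear substitutions -/

/-- substitution of variables along a linear map -/
def subst (φ : (Fin 3 → k) →ₗ[k] (Fin 3 → k)) :
    MvPolynomial (Fin 3) k →ₐ[k] MvPolynomial (Fin 3) k :=
  MvPolynomial.aeval (fun i => ∑ j : Fin 3, C (φ (Pi.single j 1) i) * X j)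

lemma eval_subst (φ : (Fin 3 → k) →ₗ[k] (Fin 3 → k)) (v : Fin 3 → k)
    (f : MvPolynomial (Fin 3) k) : eval v (subst φ f) = eval (φ v) f := by
  have h : (MvPolynomial.eval v).comp (subst φ (k := k)).toRingHom = MvPolynomial.eval (φ v) := by
    apply MvPolynomial.ringHom_ext
    · intro a; simp [subst]
    · intro i
      simp only [RingHom.coe_comp, Function.comp_apply, AlgHom.toRingHom_eq_coe,
        RingHom.coe_coe]
      rw [show (subst φ) (X i) = ∑ j : Fin 3, C (φ (Pi.single j 1) i) * X j by
        simp [subst], map_sum]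
      simp only [map_mul, eval_C, eval_X]
      conv_rhs => rw [pi_eq_sum_univ v]
      rw [map_sum]
      simp only [map_smul]
      rw [Finset.sum_apply]
      apply Finset.sum_congr rfl
      intro j _
      have hps : (fun j1 => if j = j1 then (1:k) else 0) = Pi.single j 1 := by
        funext j1
        rw [Pi.single_apply]
        simp [eq_comm]
      rw [hps]
      simp [mul_comm]
  exact RingHom.congr_fun h f

lemma subst_homog (φ : (Fin 3 → k) →ₗ[k] (Fin 3 → k)) {p : MvPolynomial (Fin 3) k} {n : ℕ}
    (hp : p.IsHomogeneous n) : (subst φ p).IsHomogeneous n := by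
  have := hp.aeval (g := fun i => ∑ j : Fin 3, (C (φ (Pi.single j 1) i) * X j : MvPolynomial (Fin 3) k)) (n := 1) ?_
  · rw [one_mul] at this
    unfold subst
    exact this
  · intro i
    exact IsHomogeneous.sum _ _ _ (fun j _ => isHomogeneous_C_mul_X _ _)

variable [Infinite k]

/-- the substitution along a linear equivalence, as an algebra equivalence;
`eval v (substEquiv e f) = eval (e.symm v) f`. -/
def substEquiv (e : (Fin 3 → k) ≃ₗ[k] (Fin 3 → k)) :
    MvPolynomial (Fin 3) k ≃ₐ[k] MvPolynomial (Fin 3) k :=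
  AlgEquiv.ofAlgHom (subst (e.symm : (Fin 3 → k) →ₗ[k] (Fin 3 → k)))
    (subst (e : (Fin 3 → k) →ₗ[k] (Fin 3 → k)))
    (by
      apply AlgHom.ext
      intro f
      apply MvPolynomial.funext
      intro v
      simp only [AlgHom.comp_apply, AlgHom.coe_id, id_eq]
      rw [eval_subst, eval_subst]
      simp)
    (by
      apply AlgHom.ext
      intro f
      apply MvPolynomial.funext
      intro v
      simp only [AlgHom.comp_apply, AlgHom.coe_id, id_eq]
      rw [eval_subst, eval_subst]
      simp)

lemma eval_substEquiv (e : (Fin 3 → k) ≃ₗ[k] (Fin 3 → k)) (v : Fin 3 → k)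
    (f : MvPolynomial (Fin 3) k) : eval v (substEquiv e f) = eval (e.symm v) f :=
  eval_subst _ v f

lemma eval_substEquiv_symm (e : (Fin 3 → k) ≃ₗ[k] (Fin 3 → k)) (v : Fin 3 → k)
    (f : MvPolynomial (Fin 3) k) : eval v ((substEquiv e).symm f) = eval (e v) f :=
  eval_subst _ v f

lemma substEquiv_homog (e : (Fin 3 → k) ≃ₗ[k] (Fin 3 → k)) {p : MvPolynomial (Fin 3) k} {n : ℕ}
    (hp : p.IsHomogeneous n) : (substEquiv e p).IsHomogeneous n :=
  subst_homog _ hp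

lemma substEquiv_symm_homog (e : (Fin 3 → k) ≃ₗ[k] (Fin 3 → k)) {p : MvPolynomial (Fin 3) k}
    {n : ℕ} (hp : p.IsHomogeneous n) : ((substEquiv e).symm p).IsHomogeneous n :=
  subst_homog _ hp

omit [Infinite k] in
/-- homogeneous linear forms vanishing at `(1,0,0)` lie in `(X 1, X 2)` -/
lemma mem_span_XX {g : MvPolynomial (Fin 3) k} (hg1 : g.IsHomogeneous 1)
    (hg0 : eval ![1, 0, 0] g = 0) :
    g ∈ Ideal.span {(X 1 : MvPolynomial (Fin 3) k), X 2} := by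
  have h0 : coeff (Finsupp.single 0 1) g = 0 := by
    rw [eval_lin hg1] at hg0
    simpa using hg0
  rw [Ideal.mem_span_pair]
  refine ⟨C (coeff (Finsupp.single 1 1) g), C (coeff (Finsupp.single 2 1) g), ?_⟩
  conv_rhs => rw [lin_repr hg1]
  rw [h0]
  simp

end Aux

lemma pointIdeal_eval_zero {k : Type} [Field k] {P : Fin 3 → k} {f : MvPolynomial (Fin 3) k}
    (h : f ∈ pointIdeal k P) : eval P f = 0 := by
  have hle : pointIdeal k P ≤ RingHom.ker (MvPolynomial.eval P) := by
    rw [pointIdeal, Ideal.span_le]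
    intro g hg
    exact RingHom.mem_ker.mpr hg.2
  exact RingHom.mem_ker.mp (hle h)

open Matrix in
/-- the unique degree-`b` curve through `P₁,…,P_b, Q₁,…,Q_b` with
multiplicity at least `b−1` at `R` is irreducible. -/
theorem irreducible_of_two_lines_and_fat_point (k : Type) [Field k] [IsAlgClosed k] [CharZero k]
    (b : ℕ) (hb : 0 < b)
    (L M : MvPolynomial (Fin 3) k) (hL : IsLine k L) (hM : IsLine k M)
    (hLM : ¬ projEq k L M)
    (P Q : Fin b → (Fin 3 → k)) (R : Fin 3 → k)
    (hP0 : ∀ i, P i ≠ 0) (hQ0 : ∀ i, Q i ≠ 0) (hR0 : R ≠ 0)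
    (hPL : ∀ i, onLine k (P i) L) (hQM : ∀ i, onLine k (Q i) M)
    (hRL : ¬ onLine k R L) (hRM : ¬ onLine k R M)
    (hPd : ∀ i j, i ≠ j → ¬ projEq k (P i) (P j))
    (hQd : ∀ i j, i ≠ j → ¬ projEq k (Q i) (Q j))
    (hPQ : ∀ i j, ¬ projEq k (P i) (Q j))
    (hPint : ∀ i, ¬ onLine k (P i) M) (hQint : ∀ i, ¬ onLine k (Q i) L)
    (hcol : ∀ i j, ¬ collinear3 k R (P i) (Q j)) :
    ∀ f ∈ (⨅ i, pointIdeal k (P i)) ⊓ (⨅ i, pointIdeal k (Q i)) ⊓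
        pointIdeal k R ^ (b - 1),
      f ≠ 0 → f.IsHomogeneous b → Irreducible f := by
  intro f hf hf0 hfb
  classical
  obtain ⟨hfPQ, hfR⟩ := Submodule.mem_inf.mp hf
  obtain ⟨hfP, hfQ⟩ := Submodule.mem_inf.mp hfPQ
  have hevalP : ∀ i, eval (P i) f = 0 := fun i =>
    pointIdeal_eval_zero (Ideal.mem_iInf.mp hfP i)
  have hevalQ : ∀ j, eval (Q j) f = 0 := fun j =>
    pointIdeal_eval_zero (Ideal.mem_iInf.mp hfQ j)
  -- coefficient vectors of the two lines
  set ℓc : Fin 3 → k := fun i => coeff (Finsupp.single i 1) L with hℓcdef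
  set mc : Fin 3 → k := fun i => coeff (Finsupp.single i 1) M with hmcdef
  have hLdot : ∀ v : Fin 3 → k, eval v L = ℓc ⬝ᵥ v := by
    intro v
    rw [Aux.eval_lin hL.2]
    simp [dotProduct, Fin.sum_univ_three, hℓcdef]
  have hMdot : ∀ v : Fin 3 → k, eval v M = mc ⬝ᵥ v := by
    intro v
    rw [Aux.eval_lin hM.2]
    simp [dotProduct, Fin.sum_univ_three, hmcdef]
  have hmc0 : mc ≠ 0 := by
    intro h
    apply hM.1
    rw [Aux.lin_repr hM.2]
    have h0 : ∀ i : Fin 3, coeff (Finsupp.single i 1) M = 0 := by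
      intro i
      have := congrFun h i
      simpa [hmcdef] using this
    rw [h0 0, h0 1, h0 2]
    simp
  have hℓc0 : ℓc ≠ 0 := by
    intro h
    apply hL.1
    rw [Aux.lin_repr hL.2]
    have h0 : ∀ i : Fin 3, coeff (Finsupp.single i 1) L = 0 := by
      intro i
      have := congrFun h i
      simpa [hℓcdef] using this
    rw [h0 0, h0 1, h0 2]
    simp
  have hli2 : LinearIndependent k ![ℓc, mc] := by
    rw [linearIndependent_fin2]
    refine ⟨hmc0, ?_⟩
    intro c hc
    have hc0 : c ≠ 0 := by
      rintro rfl
      rw [zero_smul] at hc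
      exact hℓc0 hc.symm
    apply hLM
    refine ⟨c⁻¹, inv_ne_zero hc0, ?_⟩
    have hmi : ∀ i : Fin 3, coeff (Finsupp.single i 1) M = c⁻¹ * coeff (Finsupp.single i 1) L := by
      intro i
      have h1 : c * mc i = ℓc i := by
        have := congrFun hc i
        simpa using this
      have h2 : mc i = coeff (Finsupp.single i 1) M := by rw [hmcdef]
      have h3 : ℓc i = coeff (Finsupp.single i 1) L := by rw [hℓcdef]
      rw [h2, h3] at h1
      field_simp
      linear_combination h1
    conv_lhs => rw [Aux.lin_repr hL.2]
    conv_rhs => rw [Aux.lin_repr hM.2]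
    rw [hmi 0, hmi 1, hmi 2, smul_eq_C_mul]
    simp only [_root_.map_mul]
    ring
  set S : Fin 3 → k := crossProduct ℓc mc with hSdef
  have hS0 : S ≠ 0 := by
    rw [hSdef]
    exact crossProduct_ne_zero_iff_linearIndependent.mpr hli2
  set i0 : Fin b := ⟨0, hb⟩ with hi0def
  -- basic nonvanishing facts
  have hℓR : eval R L ≠ 0 := hRL
  have hmR : eval R M ≠ 0 := hRM
  have hmP0 : eval (P i0) M ≠ 0 := hPint i0
  have hℓP : ∀ i, eval (P i) L = 0 := hPL
  have hmQ : ∀ j, eval (Q j) M = 0 := hQM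
  have hℓQ : ∀ j, eval (Q j) L ≠ 0 := hQint
  have hℓS : ℓc ⬝ᵥ S = 0 := dot_self_cross _ _
  have hmS : mc ⬝ᵥ S = 0 := dot_cross_self _ _
  -- the basis (R, P i0, S)
  have hli3 : LinearIndependent k ![R, P i0, S] := by
    rw [Fintype.linearIndependent_iff]
    intro g hg
    rw [Fin.sum_univ_three] at hg
    have hg' : g 0 • R + g 1 • P i0 + g 2 • S = 0 := by
      simpa using hg
    have hdot : ∀ u : Fin 3 → k,
        g 0 * (u ⬝ᵥ R) + g 1 * (u ⬝ᵥ P i0) + g 2 * (u ⬝ᵥ S) = 0 := by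
      intro u
      have h1 : u ⬝ᵥ (g 0 • R + g 1 • P i0 + g 2 • S) = u ⬝ᵥ (0 : Fin 3 → k) := by
        rw [hg']
      rw [show u ⬝ᵥ (0 : Fin 3 → k) = 0 from by simp [dotProduct]] at h1
      rw [← h1]
      simp [dotProduct, Fin.sum_univ_three]
      ring
    have h0 : g 0 = 0 := by
      have := hdot ℓc
      rw [← hLdot, ← hLdot, hℓS, hℓP i0] at this
      have h1 : g 0 * eval R L = 0 := by linear_combination this
      rcases mul_eq_zero.mp h1 with h | h
      · exact h
      · exact absurd h hℓR
    have h1 : g 1 = 0 := by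
      have := hdot mc
      rw [← hMdot, ← hMdot, hmS, h0] at this
      have h2 : g 1 * eval (P i0) M = 0 := by linear_combination this
      rcases mul_eq_zero.mp h2 with h | h
      · exact h
      · exact absurd h hmP0
    have h2 : g 2 = 0 := by
      rw [h0, h1, zero_smul, zero_smul, zero_add, zero_add] at hg'
      rcases smul_eq_zero.mp hg' with h | h
      · exact h
      · exact absurd h hS0
    intro i
    fin_cases i
    · exact h0
    · exact h1
    · exact h2
  have hcard : Fintype.card (Fin 3) = Module.finrank k (Fin 3 → k) := by
    rw [Fintype.card_fin, Module.finrank_fin_fun]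
  set Bb : Module.Basis (Fin 3) k (Fin 3 → k) :=
    basisOfLinearIndependentOfCardEqFinrank hli3 hcard with hBbdef
  have hcoe : ⇑Bb = ![R, P i0, S] := coe_basisOfLinearIndependentOfCardEqFinrank _ _
  set e : (Fin 3 → k) ≃ₗ[k] (Fin 3 → k) := Bb.equivFun with hedef
  have hsymm : ∀ w : Fin 3 → k, e.symm w = w 0 • R + w 1 • P i0 + w 2 • S := by
    intro w
    rw [hedef, Module.Basis.equivFun_symm_apply, Fin.sum_univ_three, hcoe]
    simp
  have hexpand : ∀ (u : Fin 3 → k) (w : Fin 3 → k),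
      u ⬝ᵥ e.symm w = w 0 * (u ⬝ᵥ R) + w 1 * (u ⬝ᵥ P i0) + w 2 * (u ⬝ᵥ S) := by
    intro u w
    rw [hsymm]
    simp [dotProduct, Fin.sum_univ_three]
    ring
  have hLcoord : ∀ w : Fin 3 → k, eval w L = e w 0 * eval R L := by
    intro w
    conv_lhs => rw [← e.symm_apply_apply w]
    rw [hLdot, hexpand, ← hLdot, ← hLdot, hℓS, hℓP i0]
    ring
  have hMcoord : ∀ w : Fin 3 → k,
      eval w M = e w 0 * eval R M + e w 1 * eval (P i0) M := by
    intro w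
    conv_lhs => rw [← e.symm_apply_apply w]
    rw [hMdot, hexpand, ← hMdot, ← hMdot, hmS]
    ring
  set p : Fin b → Fin 3 → k := fun i => e (P i) with hpdef
  set q : Fin b → Fin 3 → k := fun j => e (Q j) with hqdef
  have hp0 : ∀ i, p i 0 = 0 := by
    intro i
    have := hLcoord (P i)
    rw [hℓP i] at this
    rcases mul_eq_zero.mp this.symm with h | h
    · exact h
    · exact absurd h hℓR
  have hp1 : ∀ i, p i 1 ≠ 0 := by
    intro i hz
    apply hPint i
    show eval (P i) M = 0
    rw [hMcoord (P i)]
    have h0 : p i 0 = 0 := hp0 i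
    rw [show e (P i) 0 = p i 0 from rfl, show e (P i) 1 = p i 1 from rfl, h0, hz]
    ring
  have hq0 : ∀ j, q j 0 ≠ 0 := by
    intro j hz
    apply hℓQ j
    rw [hLcoord (Q j), show e (Q j) 0 = q j 0 from rfl, hz]
    ring
  have hqM : ∀ j, q j 0 * eval R M + q j 1 * eval (P i0) M = 0 := by
    intro j
    have := hMcoord (Q j)
    rw [hmQ j] at this
    exact this.symm
  have hq1 : ∀ j, q j 1 ≠ 0 := by
    intro j hz
    have := hqM j
    rw [hz, zero_mul, add_zero] at this
    rcases mul_eq_zero.mp this with h | h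
    · exact hq0 j h
    · exact hmR h
  set γ : k := -(eval (P i0) M) / eval R M with hγdef
  have hγ0 : γ ≠ 0 := div_ne_zero (neg_ne_zero.mpr hmP0) hmR
  have hqγ : ∀ j, q j 0 = γ * q j 1 := by
    intro j
    have h := hqM j
    show q j 0 = -(eval (P i0) M) / eval R M * q j 1
    rw [div_mul_eq_mul_div, eq_div_iff hRM]
    linear_combination h
  set a : Fin b → k := fun i => p i 2 / p i 1 with hadef
  set bq : Fin b → k := fun j => q j 2 / q j 1 with hbqdef
  -- the normalized curve
  set Sh : MvPolynomial (Fin 3) k ≃ₐ[k] MvPolynomial (Fin 3) k := Aux.substEquiv e with hShdef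
  set f' : MvPolynomial (Fin 3) k := Sh f with hf'def
  have hf'h : f'.IsHomogeneous b := Aux.substEquiv_homog e hfb
  have hf'0 : f' ≠ 0 := by
    intro h
    apply hf0
    have := congrArg Sh.symm h
    rw [hf'def] at this
    simpa using this
  have heval' : ∀ v : Fin 3 → k, eval v f' = eval (e.symm v) f := fun v =>
    Aux.eval_substEquiv e v f
  have hPa : ∀ i, eval ![0, 1, a i] f' = 0 := by
    intro i
    have hv : (p i 1) • ![0, 1, a i] = p i := by
      funext t
      fin_cases t
      · show p i 1 * 0 = p i 0
        rw [hp0 i]; ring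
      · show p i 1 * 1 = p i 1
        ring
      · show p i 1 * (p i 2 / p i 1) = p i 2
        rw [mul_comm]
        exact div_mul_cancel₀ _ (hp1 i)
    have h1 : eval ((p i 1) • ![0, 1, a i]) f' = (p i 1) ^ b * eval ![0, 1, a i] f' :=
      Aux.eval_smul hf'h _ _
    rw [hv, heval'] at h1
    rw [hpdef] at h1
    simp only [LinearEquiv.symm_apply_apply] at h1
    rw [hevalP i] at h1
    rcases mul_eq_zero.mp h1.symm with h | h
    · exact absurd h (pow_ne_zero _ (hp1 i))
    · exact h
  have hQb : ∀ j, eval ![γ, 1, bq j] f' = 0 := by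
    intro j
    have hv : (q j 1) • ![γ, 1, bq j] = q j := by
      funext t
      fin_cases t
      · show q j 1 * γ = q j 0
        rw [hqγ j]; ring
      · show q j 1 * 1 = q j 1
        ring
      · show q j 1 * (q j 2 / q j 1) = q j 2
        rw [mul_comm]
        exact div_mul_cancel₀ _ (hq1 j)
    have h1 : eval ((q j 1) • ![γ, 1, bq j]) f' = (q j 1) ^ b * eval ![γ, 1, bq j] f' :=
      Aux.eval_smul hf'h _ _
    rw [hv, heval'] at h1
    rw [hqdef] at h1
    simp only [LinearEquiv.symm_apply_apply] at h1
    rw [hevalQ j] at h1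
    rcases mul_eq_zero.mp h1.symm with h | h
    · exact absurd h (pow_ne_zero _ (hq1 j))
    · exact h
  -- injectivity of the parameters
  have hainj : Function.Injective a := by
    intro i i' hii
    by_contra hne
    apply hPd i i' hne
    refine ⟨p i' 1 / p i 1, div_ne_zero (hp1 i') (hp1 i), ?_⟩
    have hpp : (p i' 1 / p i 1) • p i = p i' := by
      have h2 : p i 2 * p i' 1 = p i' 2 * p i 1 := by
        have := hii
        rw [hadef] at this
        simp only at this
        rw [div_eq_div_iff (hp1 i) (hp1 i')] at this
        exact this
      funext t
      fin_cases t
      · show p i' 1 / p i 1 * p i 0 = p i' 0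
        rw [hp0 i, hp0 i']; ring
      · show p i' 1 / p i 1 * p i 1 = p i' 1
        exact div_mul_cancel₀ _ (hp1 i)
      · show p i' 1 / p i 1 * p i 2 = p i' 2
        rw [div_mul_eq_mul_div, div_eq_iff (hp1 i)]
        linear_combination h2
    calc (p i' 1 / p i 1) • P i = (p i' 1 / p i 1) • e.symm (p i) := by
          rw [show e.symm (p i) = P i from e.symm_apply_apply (P i)]
      _ = e.symm ((p i' 1 / p i 1) • p i) := by rw [_root_.map_smul]
      _ = e.symm (p i') := by rw [hpp]
      _ = P i' := e.symm_apply_apply (P i')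
  have hbinj : Function.Injective bq := by
    intro j j' hjj
    by_contra hne
    apply hQd j j' hne
    refine ⟨q j' 1 / q j 1, div_ne_zero (hq1 j') (hq1 j), ?_⟩
    have hpp : (q j' 1 / q j 1) • q j = q j' := by
      have h2 : q j 2 * q j' 1 = q j' 2 * q j 1 := by
        have := hjj
        rw [hbqdef] at this
        simp only at this
        rw [div_eq_div_iff (hq1 j) (hq1 j')] at this
        exact this
      funext t
      fin_cases t
      · show q j' 1 / q j 1 * q j 0 = q j' 0
        rw [hqγ j, hqγ j']
        rw [div_mul_eq_mul_div, div_eq_iff (hq1 j)]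
        ring
      · show q j' 1 / q j 1 * q j 1 = q j' 1
        exact div_mul_cancel₀ _ (hq1 j)
      · show q j' 1 / q j 1 * q j 2 = q j' 2
        rw [div_mul_eq_mul_div, div_eq_iff (hq1 j)]
        linear_combination h2
    calc (q j' 1 / q j 1) • Q j = (q j' 1 / q j 1) • e.symm (q j) := by
          rw [show e.symm (q j) = Q j from e.symm_apply_apply (Q j)]
      _ = e.symm ((q j' 1 / q j 1) • q j) := by rw [_root_.map_smul]
      _ = e.symm (q j') := by rw [hpp]
      _ = Q j' := e.symm_apply_apply (Q j')
  have heR : e R = ![1, 0, 0] := by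
    have h1 : e.symm ![1, 0, 0] = R := by
      rw [hsymm]
      simp
    rw [← h1, LinearEquiv.apply_symm_apply]
  have hab : ∀ i j, a i ≠ bq j := by
    intro i j heq
    apply hcol i j
    refine ⟨Sh.symm (X 2 - C (a i) * X 1), ⟨?_, ?_⟩, ?_, ?_, ?_⟩
    · intro h0
      have h1 : (X 2 - C (a i) * X 1 : MvPolynomial (Fin 3) k) = 0 := by
        have := congrArg Sh h0
        simpa using this
      have h2 := congrArg (eval ![0, 0, 1]) h1
      simp at h2
    · exact Aux.substEquiv_symm_homog e
        ((isHomogeneous_X _ _).sub (isHomogeneous_C_mul_X _ _))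
    · show eval R (Sh.symm (X 2 - C (a i) * X 1)) = 0
      rw [hShdef, Aux.eval_substEquiv_symm, heR]
      simp
    · show eval (P i) (Sh.symm (X 2 - C (a i) * X 1)) = 0
      rw [hShdef, Aux.eval_substEquiv_symm]
      rw [show e (P i) = p i from rfl]
      simp only [_root_.map_sub, _root_.map_mul, eval_X, eval_C]
      rw [sub_eq_zero]
      show p i 2 = p i 2 / p i 1 * p i 1
      exact (div_mul_cancel₀ _ (hp1 i)).symm
    · show eval (Q j) (Sh.symm (X 2 - C (a i) * X 1)) = 0
      rw [hShdef, Aux.eval_substEquiv_symm]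
      rw [show e (Q j) = q j from rfl]
      simp only [_root_.map_sub, _root_.map_mul, eval_X, eval_C]
      rw [heq, sub_eq_zero]
      show q j 2 = q j 2 / q j 1 * q j 1
      exact (div_mul_cancel₀ _ (hq1 j)).symm
  -- support bound from the fat point
  have hfR' : f' ∈ Ideal.span {(X 1 : MvPolynomial (Fin 3) k), X 2} ^ (b - 1) := by
    have hmap : f' ∈ Ideal.map Sh (pointIdeal k R ^ (b - 1)) :=
      Ideal.mem_map_of_mem Sh hfR
    rw [Ideal.map_pow] at hmap
    refine Ideal.pow_right_mono ?_ (b - 1) hmap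
    rw [pointIdeal, Ideal.map_span, Ideal.span_le]
    rintro y ⟨g, ⟨hg1, hg2⟩, rfl⟩
    apply Aux.mem_span_XX (Aux.substEquiv_homog e hg1)
    rw [show (Sh : MvPolynomial (Fin 3) k → MvPolynomial (Fin 3) k) g = Sh g from rfl,
      hShdef, Aux.eval_substEquiv]
    rw [show e.symm ![1, 0, 0] = R from by rw [hsymm]; simp]
    exact hg2
  have hsupp := Aux.span_pair_pow_supp hfR'
  have hirr' : Irreducible f' :=
    Aux.core hb hγ0 hainj hbinj hab hf'0 hf'h hsupp hPa hQb
  rw [hf'def] at hirr'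
  exact (MulEquiv.irreducible_iff Sh).mp hirr'
end
end

section
/- Let X be a standard k-configuration in P^2 of type (a,b,c) with a ≥ 3 (so 3 ≤ a < b < c). Then the Waldschmidt constant of I_X equals 3. Moreover, X satisfies Chudnovsky's inequality: for all m > 0, α(I_X^{(m)})/m ≥ (α(I_X) + 1)/2. -/
open MvPolynomial

noncomputable section

namespace Wald
variable {k : Type} [Field k]

/-- key weighted-degree-tracking hom for the point (1,0,0) -/
def phi0 : MvPolynomial (Fin 3) k →ₐ[k] Polynomial (MvPolynomial (Fin 3) k) :=
  aeval ![Polynomial.C (X 0), Polynomial.X * Polynomial.C (X 1), Polynomial.X * Polynomial.C (X 2)]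

/-- key hom for the point (1,j,h) -/
def Phi (j h : k) : MvPolynomial (Fin 3) k →ₐ[k] Polynomial (MvPolynomial (Fin 3) k) :=
  aeval ![Polynomial.C (X 0), Polynomial.X * Polynomial.C (X 1) + Polynomial.C (C j * X 0),
    Polynomial.X * Polynomial.C (X 2) + Polynomial.C (C h * X 0)]

/-- translation -/
def sh (j h : k) : MvPolynomial (Fin 3) k →ₐ[k] MvPolynomial (Fin 3) k :=
  aeval ![X 0, X 1 + C j * X 0, X 2 + C h * X 0]

def J : Ideal (MvPolynomial (Fin 3) k) := Ideal.span {X 1, X 2}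

def uv (j h : k) : Ideal (MvPolynomial (Fin 3) k) :=
  Ideal.span {X 1 - C j * X 0, X 2 - C h * X 0}

lemma deg3 (m : Fin 3 →₀ ℕ) : m.degree = m 0 + m 1 + m 2 := by
  classical
  rw [Finsupp.degree_apply,
    Finset.sum_subset (Finset.subset_univ m.support)
      (fun i _ hi => Finsupp.notMem_support_iff.mp hi), Fin.sum_univ_three]

lemma monomial_eq3 (m : Fin 3 →₀ ℕ) (c : k) :
    (monomial m c : MvPolynomial (Fin 3) k) = C c * (X 0 ^ m 0 * X 1 ^ m 1 * X 2 ^ m 2) := by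
  rw [monomial_eq, Finsupp.prod_fintype _ _ (fun i => pow_zero _), Fin.prod_univ_three]

lemma phi0_monomial (m : Fin 3 →₀ ℕ) (c : k) :
    phi0 (monomial m c) = Polynomial.X ^ (m 1 + m 2) * Polynomial.C (monomial m c) := by
  rw [phi0, aeval_monomial, Finsupp.prod_fintype _ _ (fun i => pow_zero _), Fin.prod_univ_three]
  simp only [Matrix.cons_val_zero, Matrix.cons_val_one, Matrix.head_cons, Matrix.cons_val_two,
    Matrix.tail_cons]
  rw [monomial_eq3]
  simp only [Polynomial.algebraMap_apply, MvPolynomial.algebraMap_eq, mul_pow,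
    Polynomial.C_mul, Polynomial.C_pow, pow_add]
  ring

lemma sh_comp (j h j' h' : k) : (sh j h).comp (sh j' h') = sh (j + j') (h + h') := by
  apply MvPolynomial.algHom_ext
  intro i
  fin_cases i <;>
    simp [sh, map_add, map_mul, C_add] <;> ring

lemma sh_zero : (sh 0 0 : MvPolynomial (Fin 3) k →ₐ[k] MvPolynomial (Fin 3) k) = AlgHom.id k _ := by
  apply MvPolynomial.algHom_ext
  intro i
  fin_cases i <;> simp [sh]

lemma phi0_comp_sh (j h : k) : (phi0 : MvPolynomial (Fin 3) k →ₐ[k] _).comp (sh j h) = Phi j h := by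
  apply MvPolynomial.algHom_ext
  intro i
  fin_cases i <;>
    simp [sh, Phi, phi0, Polynomial.algebraMap_apply, MvPolynomial.algebraMap_eq]


lemma mem_J_pow_iff {f : MvPolynomial (Fin 3) k} {t : ℕ} :
    f ∈ (J : Ideal (MvPolynomial (Fin 3) k)) ^ t ↔ Polynomial.X ^ t ∣ phi0 f := by
  constructor
  · intro hf
    have h1 : Ideal.map (phi0 (k := k)) J ≤ Ideal.span {Polynomial.X} := by
      rw [J, Ideal.map_span, Set.image_pair]
      apply Ideal.span_le.mpr
      rintro p (rfl | rfl) <;>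
      · simp only [phi0, aeval_X, Matrix.cons_val_one, Matrix.head_cons, Matrix.cons_val_two,
          Matrix.tail_cons]
        exact Ideal.mul_mem_right _ _ (Ideal.subset_span rfl)
    have h2 : phi0 f ∈ Ideal.map (phi0 (k := k)) (J ^ t) := Ideal.mem_map_of_mem _ hf
    rw [Ideal.map_pow] at h2
    have h3 := (Ideal.pow_right_mono h1 t) h2
    rw [Ideal.span_singleton_pow, Ideal.mem_span_singleton] at h3
    exact h3
  · intro hdvd
    -- first: every monomial of f has X1-X2 degree ≥ t
    have hsupp : ∀ m ∈ f.support, t ≤ m 1 + m 2 := by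
      intro m hm
      by_contra hlt
      push_neg at hlt
      have h0 : (phi0 f).coeff (m 1 + m 2) = 0 := by
        rw [Polynomial.X_pow_dvd_iff] at hdvd
        exact hdvd _ hlt
      rw [f.as_sum, map_sum] at h0
      simp only [phi0_monomial] at h0
      have := congrArg (MvPolynomial.coeff m) h0
      rw [Polynomial.finset_sum_coeff] at this
      simp only [mul_comm (Polynomial.X ^ _), Polynomial.coeff_C_mul, Polynomial.coeff_X_pow,
        mul_ite, mul_one, mul_zero, MvPolynomial.coeff_zero] at this
      rw [MvPolynomial.coeff_sum, Finset.sum_eq_single m] at this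
      · simp at this
        exact (MvPolynomial.mem_support_iff.mp hm) this
      · intro m' hm' hne
        split_ifs with h
        · simp [MvPolynomial.coeff_monomial, hne]
        · simp
      · intro h; exact absurd hm h
    -- second: support condition implies membership
    rw [f.as_sum]
    apply Ideal.sum_mem
    intro m hm
    have hle := hsupp m hm
    have key : (monomial m (coeff m f) : MvPolynomial (Fin 3) k)
        = (C (coeff m f) * X 0 ^ m 0) * (X 1 ^ m 1 * X 2 ^ m 2) := by
      rw [monomial_eq3]; ring
    rw [key]
    apply Ideal.mul_mem_left
    have h12 : (X 1 ^ m 1 * X 2 ^ m 2 : MvPolynomial (Fin 3) k) ∈ (J : Ideal _) ^ (m 1 + m 2) := by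
      rw [pow_add]
      exact Ideal.mul_mem_mul (Ideal.pow_mem_pow (Ideal.subset_span (by simp)) _)
        (Ideal.pow_mem_pow (Ideal.subset_span (by simp)) _)
    exact Ideal.pow_le_pow_right hle h12

lemma sh_inv (j h : k) (f : MvPolynomial (Fin 3) k) : sh j h (sh (-j) (-h) f) = f := by
  have := congrArg (fun g => g f) (sh_comp j h (-j) (-h))
  simp only [AlgHom.comp_apply] at this
  rw [this]
  simp [sh_zero]

lemma map_sh_J (j h : k) :
    Ideal.map (sh (-j) (-h)) (J : Ideal (MvPolynomial (Fin 3) k)) = uv j h := by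
  rw [J, uv, Ideal.map_span, Set.image_pair]
  congr 2
  · simp [sh, sub_eq_add_neg, map_neg]
  · simp [sh, sub_eq_add_neg, map_neg]

lemma mem_uv_pow_iff {j h : k} {f : MvPolynomial (Fin 3) k} {t : ℕ} :
    f ∈ (uv j h) ^ t ↔ Polynomial.X ^ t ∣ Phi j h f := by
  have hPhi : Phi j h f = phi0 (sh j h f) := by
    rw [← phi0_comp_sh j h]; rfl
  rw [hPhi, ← mem_J_pow_iff, ← map_sh_J j h, ← Ideal.map_pow]
  constructor
  · intro hf
    have hle : Ideal.map (sh (-j) (-h)) ((J : Ideal (MvPolynomial (Fin 3) k)) ^ t) ≤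
        Ideal.comap (sh j h) ((J : Ideal (MvPolynomial (Fin 3) k)) ^ t) := by
      rw [Ideal.map_le_iff_le_comap]
      intro x hx
      simp only [Ideal.mem_comap]
      rw [sh_inv]
      exact hx
    exact hle hf
  · intro hf
    have h2 : sh (-j) (-h) (sh j h f) ∈ Ideal.map (sh (-j) (-h)) ((J:Ideal _) ^ t) :=
      Ideal.mem_map_of_mem _ hf
    have h3 : sh (-j) (-h) (sh j h f) = f := by
      have := congrArg (fun g => g f) (sh_comp (-j) (-h) j h)
      simp only [AlgHom.comp_apply] at this
      rw [this]
      simp [sh_zero]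
    rwa [h3] at h2

lemma homog_one_eq {f : MvPolynomial (Fin 3) k} (hf : f.IsHomogeneous 1) :
    f = C (coeff (Finsupp.single 0 1) f) * X 0 + C (coeff (Finsupp.single 1 1) f) * X 1
      + C (coeff (Finsupp.single 2 1) f) * X 2 := by
  classical
  apply MvPolynomial.ext
  intro m
  by_cases h0 : m = Finsupp.single 0 1
  · subst h0; simp [coeff_C_mul, coeff_X', Finsupp.single_eq_single_iff]
  by_cases h1 : m = Finsupp.single 1 1
  · subst h1; simp [coeff_C_mul, coeff_X', Finsupp.single_eq_single_iff]
  by_cases h2 : m = Finsupp.single 2 1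
  · subst h2; simp [coeff_C_mul, coeff_X', Finsupp.single_eq_single_iff]
  have hz : coeff m f = 0 := by
    apply hf.coeff_eq_zero
    intro hdeg
    rw [deg3] at hdeg
    -- m 0 + m 1 + m 2 = 1 means m is one of the singles
    have : m = Finsupp.single 0 1 ∨ m = Finsupp.single 1 1 ∨ m = Finsupp.single 2 1 := by
      have c0 : m 0 + m 1 + m 2 = 1 := hdeg
      rcases Nat.eq_zero_or_pos (m 0) with hm0 | hm0
      · rcases Nat.eq_zero_or_pos (m 1) with hm1 | hm1
        · right; right
          ext i
          fin_cases i <;> simp [Finsupp.single_apply, hm0, hm1] <;> omega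
        · right; left
          ext i
          fin_cases i <;> simp [Finsupp.single_apply, hm0] <;> omega
      · left
        ext i
        fin_cases i <;> simp [Finsupp.single_apply] <;> omega
    tauto
  rw [hz]
  simp only [coeff_add, coeff_C_mul, coeff_X']
  rw [if_neg (fun h => h0 h.symm), if_neg (fun h => h1 h.symm), if_neg (fun h => h2 h.symm)]
  ring

lemma pointIdeal_eq (j h : k) : pointIdeal k ![1, j, h] = uv j h := by
  apply le_antisymm
  · rw [pointIdeal, Ideal.span_le]
    rintro l ⟨hl1, hl0⟩
    have heq := homog_one_eq hl1
    set A := coeff (Finsupp.single 0 1) l with hA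
    set B := coeff (Finsupp.single 1 1) l with hB
    set D := coeff (Finsupp.single 2 1) l with hD
    have hev : A + B * j + D * h = 0 := by
      have := hl0
      rw [heq] at this
      simpa [mul_comm] using this
    have hrw : l = C B * (X 1 - C j * X 0) + C D * (X 2 - C h * X 0) := by
      rw [heq]
      have hAe : A = -(B * j + D * h) := by linear_combination hev
      rw [hAe]
      simp only [map_neg, map_add, map_mul]
      ring
    rw [hrw]
    exact Ideal.add_mem _
      (Ideal.mul_mem_left _ _ (Ideal.subset_span (Set.mem_insert _ _)))
      (Ideal.mul_mem_left _ _ (Ideal.subset_span (Set.mem_insert_of_mem _ rfl)))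
  · rw [uv, Ideal.span_le]
    rintro l (rfl | rfl)
    · apply Ideal.subset_span
      refine ⟨(isHomogeneous_X k 1).sub (isHomogeneous_C_mul_X j 0), ?_⟩
      simp
    · apply Ideal.subset_span
      refine ⟨(isHomogeneous_X k 2).sub (isHomogeneous_C_mul_X h 0), ?_⟩
      simp

lemma mem_point_pow_iff {j h : k} {f : MvPolynomial (Fin 3) k} {t : ℕ} :
    f ∈ pointIdeal k ![1, j, h] ^ t ↔ Polynomial.X ^ t ∣ Phi j h f := by
  rw [pointIdeal_eq, mem_uv_pow_iff]

/-- restriction to the line x₂ = h x₀, dehomogenized -/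
def gam (h : k) : MvPolynomial (Fin 3) k →ₐ[k] Polynomial k :=
  aeval ![1, Polynomial.X, Polynomial.C h]

/-- substitution x₂ ↦ h x₀ -/
def rho (h : k) : MvPolynomial (Fin 3) k →ₐ[k] MvPolynomial (Fin 3) k :=
  aeval ![X 0, X 1, C h * X 0]

lemma gam_comp_rho (h : k) : (gam h).comp (rho h) = gam h := by
  apply MvPolynomial.algHom_ext
  intro i
  fin_cases i <;> simp [gam, rho]

lemma rho_sub_dvd (h : k) (f : MvPolynomial (Fin 3) k) :
    (X 2 - C h * X 0) ∣ (f - rho h f) := by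
  classical
  have hsplit : f - rho h f
      = ∑ m ∈ f.support, ((monomial m (coeff m f)) - rho h (monomial m (coeff m f))) := by
    rw [Finset.sum_sub_distrib, ← map_sum, ← f.as_sum]
  rw [hsplit]
  apply Finset.dvd_sum
  intro m _
  have hdvd := Dvd.dvd.mul_left (sub_dvd_pow_sub_pow (X 2 : MvPolynomial (Fin 3) k) (C h * X 0) (m 2))
    (C (coeff m f) * X 0 ^ m 0 * X 1 ^ m 1)
  have heq : (monomial m) (coeff m f) - (rho h) ((monomial m) (coeff m f))
      = C (coeff m f) * X 0 ^ m 0 * X 1 ^ m 1 * (X 2 ^ m 2 - (C h * X 0) ^ m 2) := by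
    rw [rho, aeval_monomial, Finsupp.prod_fintype _ _ (fun i => pow_zero _), Fin.prod_univ_three]
    simp only [Matrix.cons_val_zero, Matrix.cons_val_one, Matrix.head_cons, Matrix.cons_val_two,
      Matrix.tail_cons, MvPolynomial.algebraMap_eq]
    rw [monomial_eq3]
    ring
  rw [heq]
  exact hdvd

lemma rho_eq_zero_dvd {h : k} {f : MvPolynomial (Fin 3) k} (hf : rho h f = 0) :
    (X 2 - C h * X 0) ∣ f := by
  have := rho_sub_dvd h f
  rwa [hf, sub_zero] at this

lemma rho_support {h : k} {d : ℕ} {f : MvPolynomial (Fin 3) k} (hf : f.IsHomogeneous d) :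
    ∀ m ∈ (rho h f).support, m 2 = 0 ∧ m 0 + m 1 = d := by
  classical
  intro m hm
  have hrepr : rho h f = ∑ m' ∈ f.support,
      monomial (Finsupp.single (0 : Fin 3) (m' 0 + m' 2) + Finsupp.single 1 (m' 1))
        (coeff m' f * h ^ (m' 2)) := by
    conv_lhs => rw [f.as_sum, map_sum]
    apply Finset.sum_congr rfl
    intro m' _
    rw [rho, aeval_monomial, Finsupp.prod_fintype _ _ (fun i => pow_zero _), Fin.prod_univ_three]
    simp only [Matrix.cons_val_zero, Matrix.cons_val_one, Matrix.head_cons, Matrix.cons_val_two,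
      Matrix.tail_cons, MvPolynomial.algebraMap_eq]
    rw [monomial_eq3]
    have T0 : ((Finsupp.single (0 : Fin 3) (m' 0 + m' 2) + Finsupp.single 1 (m' 1) :
        Fin 3 →₀ ℕ)) 0 = m' 0 + m' 2 := by simp
    have T1 : ((Finsupp.single (0 : Fin 3) (m' 0 + m' 2) + Finsupp.single 1 (m' 1) :
        Fin 3 →₀ ℕ)) 1 = m' 1 := by simp
    have T2 : ((Finsupp.single (0 : Fin 3) (m' 0 + m' 2) + Finsupp.single 1 (m' 1) :
        Fin 3 →₀ ℕ)) 2 = 0 := by simp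
    rw [T0, T1, T2]
    simp only [pow_zero, mul_one, pow_add, mul_pow, C_mul, C_pow]
    ring
  rw [hrepr] at hm
  have hm2 := MvPolynomial.support_sum hm
  rw [Finset.mem_biUnion] at hm2
  obtain ⟨m', hm', hmm⟩ := hm2
  have hsing := MvPolynomial.support_monomial_subset hmm
  rw [Finset.mem_singleton] at hsing
  subst hsing
  have hdeg : m' 0 + m' 1 + m' 2 = d := by
    have h1 := hf (MvPolynomial.mem_support_iff.mp hm')
    have h2 : m'.degree = d := by rw [Finsupp.degree_eq_weight_one]; exact h1
    rwa [deg3] at h2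
  refine ⟨by simp, ?_⟩
  have A0 : ((Finsupp.single (0 : Fin 3) (m' 0 + m' 2) + Finsupp.single 1 (m' 1) :
      Fin 3 →₀ ℕ)) 0 = m' 0 + m' 2 := by simp
  have A1 : ((Finsupp.single (0 : Fin 3) (m' 0 + m' 2) + Finsupp.single 1 (m' 1) :
      Fin 3 →₀ ℕ)) 1 = m' 1 := by simp
  rw [A0, A1]
  omega

lemma gam_monomial (h : k) (m : Fin 3 →₀ ℕ) (c : k) :
    gam h (monomial m c) = Polynomial.C (c * h ^ (m 2)) * Polynomial.X ^ (m 1) := by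
  rw [gam, aeval_monomial, Finsupp.prod_fintype _ _ (fun i => pow_zero _), Fin.prod_univ_three]
  simp only [Matrix.cons_val_zero, Matrix.cons_val_one, Matrix.head_cons, Matrix.cons_val_two,
    Matrix.tail_cons, Polynomial.algebraMap_eq]
  rw [← Polynomial.C_pow]
  simp only [Polynomial.C_mul]
  ring

lemma gam_rho_ne_zero {h : k} {d : ℕ} {f : MvPolynomial (Fin 3) k} (hf : f.IsHomogeneous d)
    (hne : rho h f ≠ 0) : gam h (rho h f) ≠ 0 := by
  classical
  set g := rho h f with hg
  have hsup := rho_support hf (h := h)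
  obtain ⟨m0, hm0⟩ := MvPolynomial.support_nonempty.mpr hne
  intro hzero
  have hco : (gam h g).coeff (m0 1) = 0 := by rw [hzero]; simp
  rw [g.as_sum, map_sum] at hco
  simp only [gam_monomial] at hco
  rw [Polynomial.finset_sum_coeff] at hco
  simp only [Polynomial.coeff_C_mul, Polynomial.coeff_X_pow, mul_ite, mul_one, mul_zero] at hco
  rw [Finset.sum_eq_single m0] at hco
  · obtain ⟨h2, _⟩ := hsup m0 hm0
    rw [if_pos rfl, h2] at hco
    simp at hco
    exact (MvPolynomial.mem_support_iff.mp hm0) hco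
  · intro m' hm' hne'
    rw [if_neg]
    intro hcontr
    obtain ⟨h2', hd'⟩ := hsup m' hm'
    obtain ⟨h2, hd⟩ := hsup m0 hm0
    apply hne'
    ext i
    fin_cases i
    · show m' 0 = m0 0; omega
    · show m' 1 = m0 1; omega
    · show m' 2 = m0 2; omega
  · intro hcontr; exact absurd hm0 hcontr

lemma gam_natDegree_le {h : k} {d : ℕ} {f : MvPolynomial (Fin 3) k} (hf : f.IsHomogeneous d) :
    (gam h f).natDegree ≤ d := by
  classical
  have hgam : gam h f = gam h (rho h f) := by
    have := congrArg (fun g => g f) (gam_comp_rho h)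
    simpa using this.symm
  rw [hgam]
  set g := rho h f with hg
  have hsup := rho_support hf (h := h)
  rw [g.as_sum, map_sum]
  apply Polynomial.natDegree_sum_le_of_forall_le
  intro m hm
  rw [gam_monomial]
  refine le_trans (Polynomial.natDegree_C_mul_le _ _) ?_
  refine le_trans (Polynomial.natDegree_X_pow_le _) ?_
  obtain ⟨_, hd⟩ := hsup m hm
  omega

lemma gam_eq_zero_dvd {h : k} {d : ℕ} {f : MvPolynomial (Fin 3) k} (hf : f.IsHomogeneous d)
    (hz : gam h f = 0) : (X 2 - C h * X 0) ∣ f := by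
  have hgam : gam h f = gam h (rho h f) := by
    have := congrArg (fun g => g f) (gam_comp_rho h)
    simpa using this.symm
  by_cases hr : rho h f = 0
  · exact rho_eq_zero_dvd hr
  · exact absurd (hgam ▸ hz) (gam_rho_ne_zero hf hr)

lemma gam_dvd_of_point {j h : k} {f : MvPolynomial (Fin 3) k} {t : ℕ}
    (hf : f ∈ pointIdeal k ![1, j, h] ^ t) :
    (Polynomial.X - Polynomial.C j) ^ t ∣ gam h f := by
  rw [pointIdeal_eq] at hf
  have h1 : Ideal.map (gam h) (uv j h) ≤ Ideal.span {Polynomial.X - Polynomial.C j} := by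
    rw [uv, Ideal.map_span, Set.image_pair]
    apply Ideal.span_le.mpr
    rintro p (rfl | rfl)
    · have : gam h (X 1 - C j * X 0) = Polynomial.X - Polynomial.C j := by
        simp [gam]
      rw [this]; exact Ideal.subset_span rfl
    · have : gam h (X 2 - C h * X 0) = 0 := by
        simp [gam]
      rw [this]; exact Ideal.zero_mem _
  have h2 : gam h f ∈ Ideal.map (gam h) ((uv j h) ^ t) := Ideal.mem_map_of_mem _ hf
  rw [Ideal.map_pow] at h2
  have h3 := (Ideal.pow_right_mono h1 t) h2
  rwa [Ideal.span_singleton_pow, Ideal.mem_span_singleton] at h3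

/-- total-degree-tracking hom -/
def delta : MvPolynomial (Fin 3) k →ₐ[k] Polynomial (MvPolynomial (Fin 3) k) :=
  aeval ![Polynomial.X * Polynomial.C (X 0), Polynomial.X * Polynomial.C (X 1),
    Polynomial.X * Polynomial.C (X 2)]

lemma delta_monomial (m : Fin 3 →₀ ℕ) (c : k) :
    delta (monomial m c) = Polynomial.X ^ (m 0 + m 1 + m 2) * Polynomial.C (monomial m c) := by
  rw [delta, aeval_monomial, Finsupp.prod_fintype _ _ (fun i => pow_zero _), Fin.prod_univ_three]
  simp only [Matrix.cons_val_zero, Matrix.cons_val_one, Matrix.head_cons, Matrix.cons_val_two,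
    Matrix.tail_cons]
  rw [monomial_eq3]
  simp only [Polynomial.algebraMap_apply, MvPolynomial.algebraMap_eq, mul_pow,
    Polynomial.C_mul, Polynomial.C_pow, pow_add]
  ring

lemma delta_coeff (f : MvPolynomial (Fin 3) k) (e : ℕ) :
    (delta f).coeff e = homogeneousComponent e f := by
  classical
  conv_lhs => rw [f.as_sum, map_sum]
  simp only [delta_monomial]
  rw [Polynomial.finset_sum_coeff]
  simp only [mul_comm (Polynomial.X ^ _), Polynomial.coeff_C_mul, Polynomial.coeff_X_pow,
    mul_ite, mul_one, mul_zero]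
  rw [homogeneousComponent_apply, Finset.sum_filter]
  apply Finset.sum_congr rfl
  intro m _
  have : m.degree = m 0 + m 1 + m 2 := deg3 m
  by_cases hd : m.degree = e
  · rw [if_pos hd, if_pos (by omega)]
  · rw [if_neg hd, if_neg (by omega)]

lemma delta_homog {f : MvPolynomial (Fin 3) k} {d : ℕ} (hf : f.IsHomogeneous d) :
    delta f = Polynomial.X ^ d * Polynomial.C f := by
  conv_lhs => rw [f.as_sum, map_sum]
  simp only [delta_monomial]
  have : ∀ m ∈ f.support, Polynomial.X ^ (m 0 + m 1 + m 2) * Polynomial.C (monomial m (coeff m f))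
      = Polynomial.X ^ d * Polynomial.C (monomial m (coeff m f)) := by
    intro m hm
    have h1 := hf (MvPolynomial.mem_support_iff.mp hm)
    have h2 : m.degree = d := by rw [Finsupp.degree_eq_weight_one]; exact h1
    rw [deg3] at h2
    rw [h2]
  rw [Finset.sum_congr rfl this, ← Finset.mul_sum]
  congr 1
  rw [← map_sum]
  congr 1
  exact f.as_sum.symm

lemma factor_homog {l g f : MvPolynomial (Fin 3) k} {d : ℕ} (hl : l.IsHomogeneous 1)
    (hf : f.IsHomogeneous d) (hne : f ≠ 0) (heq : f = l * g) :
    ∃ e, g.IsHomogeneous e ∧ d = e + 1 := by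
  classical
  have hlne : l ≠ 0 := fun h => hne (by rw [heq, h, zero_mul])
  have hgne : g ≠ 0 := fun h => hne (by rw [heq, h, mul_zero])
  have hd : delta f = (Polynomial.X * Polynomial.C l) * delta g := by
    rw [heq, map_mul, delta_homog hl, pow_one]
  rw [delta_homog hf] at hd
  have hd0 : d ≠ 0 := by
    intro h0
    subst h0
    have hco := congrArg (fun p => Polynomial.coeff p 0) hd
    simp only [pow_zero, one_mul, mul_assoc, Polynomial.mul_coeff_zero, Polynomial.coeff_X_zero,
      zero_mul, Polynomial.coeff_C_zero] at hco
    exact hne hco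
  obtain ⟨d', rfl⟩ := Nat.exists_eq_succ_of_ne_zero hd0
  have hcancel : Polynomial.X ^ d' * Polynomial.C f = Polynomial.C l * delta g := by
    have hX : (Polynomial.X : Polynomial (MvPolynomial (Fin 3) k)) ≠ 0 := Polynomial.X_ne_zero
    apply mul_left_cancel₀ hX
    rw [← mul_assoc, ← pow_succ', hd]
    ring
  have hcomp : ∀ e, e ≠ d' → homogeneousComponent e g = 0 := by
    intro e he
    have := congrArg (fun p => Polynomial.coeff p e) hcancel
    simp only [Polynomial.coeff_C_mul, delta_coeff] at this
    rw [mul_comm (Polynomial.X ^ d'), Polynomial.coeff_C_mul, Polynomial.coeff_X_pow,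
      if_neg he, mul_zero] at this
    exact (mul_eq_zero.mp this.symm).resolve_left hlne
  have hgsum := g.sum_homogeneousComponent
  have hrange : g = homogeneousComponent d' g := by
    by_cases hmem : d' ∈ Finset.range (g.totalDegree + 1)
    · conv_lhs => rw [← hgsum]
      rw [Finset.sum_eq_single_of_mem d' hmem (fun i _ hi => hcomp i hi)]
    · exfalso
      apply hgne
      rw [← hgsum]
      apply Finset.sum_eq_zero
      intro i hi
      exact hcomp i (fun h => hmem (h ▸ hi))
  exact ⟨d', hrange ▸ homogeneousComponent_isHomogeneous d' g, rfl⟩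

lemma Phi_line (j h h' : k) : Phi j h (X 2 - C h' * X 0)
    = Polynomial.X * Polynomial.C (X 2) + Polynomial.C (C (h - h') * X 0) := by
  simp only [map_sub, map_mul, Phi, aeval_X, aeval_C, Matrix.cons_val_zero, Matrix.cons_val_one,
    Matrix.head_cons, Matrix.cons_val_two, Matrix.tail_cons, Polynomial.algebraMap_apply,
    MvPolynomial.algebraMap_eq, C_sub, Polynomial.C_sub, Polynomial.C_mul]
  ring

lemma not_X_dvd_line {h h' : k} (j : k) (hne : h ≠ h') :
    ¬ (Polynomial.X ∣ Phi j h (X 2 - C h' * X 0)) := by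
  rw [Polynomial.X_dvd_iff, Phi_line]
  simp only [Polynomial.coeff_add, Polynomial.mul_coeff_zero, Polynomial.coeff_X_zero, zero_mul,
    Polynomial.coeff_C_zero, zero_add]
  intro hzero
  rcases mul_eq_zero.mp hzero with h1 | h1
  · rw [MvPolynomial.C_eq_zero, sub_eq_zero] at h1
    exact hne h1
  · exact MvPolynomial.X_ne_zero _ h1

lemma cancel_left {j h : k} {t : ℕ} {w f : MvPolynomial (Fin 3) k}
    (hw : ¬ (Polynomial.X ∣ Phi j h w)) (hm : w * f ∈ pointIdeal k ![1, j, h] ^ t) :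
    f ∈ pointIdeal k ![1, j, h] ^ t := by
  rw [mem_point_pow_iff] at hm ⊢
  rw [map_mul] at hm
  exact (Polynomial.prime_X).pow_dvd_of_dvd_mul_left t hw hm

lemma drop_order {j h : k} {t : ℕ} {f : MvPolynomial (Fin 3) k}
    (hm : (X 2 - C h * X 0) * f ∈ pointIdeal k ![1, j, h] ^ (t + 1)) :
    f ∈ pointIdeal k ![1, j, h] ^ t := by
  rw [mem_point_pow_iff] at hm ⊢
  rw [map_mul] at hm
  have hL : Phi j h (X 2 - C h * X 0) = Polynomial.X * Polynomial.C (X 2) := by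
    rw [Phi_line]; simp
  rw [hL, mul_assoc, pow_succ'] at hm
  have h2 : Polynomial.X ^ t ∣ Polynomial.C (X 2) * Phi j h f :=
    (mul_dvd_mul_iff_left (Polynomial.X_ne_zero (R := MvPolynomial (Fin 3) k))).mp hm
  refine (Polynomial.prime_X).pow_dvd_of_dvd_mul_left t ?_ h2
  rw [Polynomial.X_dvd_iff, Polynomial.coeff_C_zero]
  exact MvPolynomial.X_ne_zero _

lemma mem_symb {Xs : Set (Fin 3 → k)} {t : ℕ} {f : MvPolynomial (Fin 3) k} :
    f ∈ symbolicPower k Xs t ↔ ∀ P ∈ Xs, f ∈ pointIdeal k P ^ t := by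
  simp [symbolicPower, Ideal.mem_iInf]

lemma div_of_row [CharZero k] {n t d : ℕ} {hh : ℕ} {f : MvPolynomial (Fin 3) k}
    (hmem : ∀ j : ℕ, j < n → f ∈ pointIdeal k ![1, (j : k), (hh : k)] ^ (t + 1))
    (hhom : f.IsHomogeneous d) (hd : d < n * (t + 1)) :
    (X 2 - C (hh : k) * X 0) ∣ f := by
  by_cases hz : gam (hh : k) f = 0
  · exact gam_eq_zero_dvd hhom hz
  exfalso
  have hprod : (∏ j ∈ Finset.range n, (Polynomial.X - Polynomial.C (j : k)) ^ (t + 1))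
      ∣ gam (hh : k) f := by
    apply Finset.prod_dvd_of_coprime
    · intro i hi j hj hij
      exact ((Polynomial.pairwise_coprime_X_sub_C (Nat.cast_injective (R := k))) hij).pow
    · intro j hj
      exact gam_dvd_of_point (hmem j (Finset.mem_range.mp hj))
  have hdeg := Polynomial.natDegree_le_of_dvd hprod hz
  have hdeg2 : (∏ j ∈ Finset.range n, (Polynomial.X - Polynomial.C (j : k)) ^ (t + 1)).natDegree
      = n * (t + 1) := by
    rw [Polynomial.natDegree_prod _ _ (fun i _ => pow_ne_zero _ (Polynomial.X_sub_C_ne_zero _))]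
    have heach : ∀ x ∈ Finset.range n,
        ((Polynomial.X - Polynomial.C ((x : ℕ) : k)) ^ (t + 1)).natDegree = t + 1 := by
      intro x _
      rw [Polynomial.natDegree_pow, Polynomial.natDegree_X_sub_C, mul_one]
    rw [Finset.sum_congr rfl heach, Finset.sum_const, Finset.card_range, smul_eq_mul]
  have hbound := gam_natDegree_le hhom (h := (hh : k))
  omega

lemma lower_bound [CharZero k] {a b c : ℕ} (ha : 3 ≤ a) (hb : 3 ≤ b) (hc : 3 ≤ c) :
    ∀ t : ℕ, ∀ d : ℕ, ∀ f : MvPolynomial (Fin 3) k, f ≠ 0 → f.IsHomogeneous d →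
      f ∈ symbolicPower k (std3 k a b c) t → 3 * t ≤ d := by
  intro t
  induction t with
  | zero => intro d f _ _ _; omega
  | succ t ih =>
    intro d f hne hhom hmem
    by_contra hcon
    push_neg at hcon
    rw [mem_symb] at hmem
    have hrow : ∀ (hh n : ℕ), ((hh = 2 ∧ n = a) ∨ (hh = 1 ∧ n = b) ∨ (hh = 0 ∧ n = c)) →
        ∀ j : ℕ, j < n → f ∈ pointIdeal k ![1, (j : k), (hh : k)] ^ (t + 1) := by
      intro hh n hcase j hj
      apply hmem
      rcases hcase with ⟨rfl, rfl⟩ | ⟨rfl, rfl⟩ | ⟨rfl, rfl⟩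
      · exact Or.inl (Or.inl ⟨j, hj, rfl⟩)
      · exact Or.inl (Or.inr ⟨j, hj, rfl⟩)
      · exact Or.inr ⟨j, hj, rfl⟩
    have hL0hom : (X 2 - C ((0 : ℕ) : k) * X 0 : MvPolynomial (Fin 3) k).IsHomogeneous 1 :=
      (isHomogeneous_X k 2).sub (isHomogeneous_C_mul_X _ 0)
    have hL1hom : (X 2 - C ((1 : ℕ) : k) * X 0 : MvPolynomial (Fin 3) k).IsHomogeneous 1 :=
      (isHomogeneous_X k 2).sub (isHomogeneous_C_mul_X _ 0)
    have hL2hom : (X 2 - C ((2 : ℕ) : k) * X 0 : MvPolynomial (Fin 3) k).IsHomogeneous 1 :=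
      (isHomogeneous_X k 2).sub (isHomogeneous_C_mul_X _ 0)
    have h20 : ((2 : ℕ) : k) ≠ ((0 : ℕ) : k) := fun h => by
      have := Nat.cast_injective (R := k) h; omega
    have h21 : ((2 : ℕ) : k) ≠ ((1 : ℕ) : k) := fun h => by
      have := Nat.cast_injective (R := k) h; omega
    have h10 : ((1 : ℕ) : k) ≠ ((0 : ℕ) : k) := fun h => by
      have := Nat.cast_injective (R := k) h; omega
    have h01 : ((0 : ℕ) : k) ≠ ((1 : ℕ) : k) := h10.symm
    have h02 : ((0 : ℕ) : k) ≠ ((2 : ℕ) : k) := h20.symm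
    have h12 : ((1 : ℕ) : k) ≠ ((2 : ℕ) : k) := h21.symm
    -- peel row 0
    obtain ⟨f1, hf1⟩ : (X 2 - C ((0 : ℕ) : k) * X 0) ∣ f :=
      div_of_row (hrow 0 c (by tauto)) hhom (by nlinarith)
    obtain ⟨d1, hf1hom, hdd1⟩ := factor_homog hL0hom hhom hne hf1
    have hf1ne : f1 ≠ 0 := fun h => hne (by rw [hf1, h, mul_zero])
    have hmem1 : ∀ (hh n : ℕ), ((hh = 2 ∧ n = a) ∨ (hh = 1 ∧ n = b)) →
        ∀ j : ℕ, j < n → f1 ∈ pointIdeal k ![1, (j : k), (hh : k)] ^ (t + 1) := by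
      intro hh n hcase j hj
      have hne' : ((hh : ℕ) : k) ≠ ((0 : ℕ) : k) := by
        rcases hcase with ⟨rfl, rfl⟩ | ⟨rfl, rfl⟩
        · exact h20
        · exact h10
      exact cancel_left (not_X_dvd_line _ hne') (hf1 ▸ hrow hh n (by tauto) j hj)
    -- peel row 1
    obtain ⟨f2, hf2⟩ : (X 2 - C ((1 : ℕ) : k) * X 0) ∣ f1 :=
      div_of_row (hmem1 1 b (by tauto)) hf1hom (by nlinarith)
    obtain ⟨d2, hf2hom, hd1d2⟩ := factor_homog hL1hom hf1hom hf1ne hf2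
    have hf2ne : f2 ≠ 0 := fun h => hf1ne (by rw [hf2, h, mul_zero])
    have hmem2 : ∀ j : ℕ, j < a → f2 ∈ pointIdeal k ![1, (j : k), ((2 : ℕ) : k)] ^ (t + 1) := by
      intro j hj
      exact cancel_left (not_X_dvd_line _ h21) (hf2 ▸ hmem1 2 a (by tauto) j hj)
    -- peel row 2
    obtain ⟨g, hg⟩ : (X 2 - C ((2 : ℕ) : k) * X 0) ∣ f2 :=
      div_of_row hmem2 hf2hom (by nlinarith)
    obtain ⟨e, hghom, hd2e⟩ := factor_homog hL2hom hf2hom hf2ne hg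
    have hgne : g ≠ 0 := fun h => hf2ne (by rw [hg, h, mul_zero])
    have hgsym : g ∈ symbolicPower k (std3 k a b c) t := by
      rw [mem_symb]
      rintro P ((⟨j, hj, rfl⟩ | ⟨j, hj, rfl⟩) | ⟨j, hj, rfl⟩)
      · -- row 2
        have m1 := cancel_left (not_X_dvd_line ((j : k)) h20) (hf1 ▸ hrow 2 a (by tauto) j hj)
        have m2 := cancel_left (not_X_dvd_line ((j : k)) h21) (hf2 ▸ m1)
        exact drop_order (hg ▸ m2)
      · -- row 1
        have m1 := cancel_left (not_X_dvd_line ((j : k)) h10) (hf1 ▸ hrow 1 b (by tauto) j hj)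
        have m2 := drop_order (hf2 ▸ m1)
        exact cancel_left (not_X_dvd_line ((j : k)) h12) (hg ▸ m2)
      · -- row 0
        have m1 := drop_order (hf1 ▸ hrow 0 c (by tauto) j hj)
        have m2 := cancel_left (not_X_dvd_line ((j : k)) h01) (hf2 ▸ m1)
        exact cancel_left (not_X_dvd_line ((j : k)) h02) (hg ▸ m2)
    have hfin := ih e g hgne hghom hgsym
    omega

lemma L_ne_zero (r : k) : (X 2 - C r * X 0 : MvPolynomial (Fin 3) k) ≠ 0 := by
  intro h
  have := congrArg (eval ![0, 0, 1]) h
  simp at this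

lemma L_mem_point (r j : k) : (X 2 - C r * X 0) ∈ pointIdeal k ![1, j, r] := by
  apply Ideal.subset_span
  refine ⟨(isHomogeneous_X k 2).sub (isHomogeneous_C_mul_X r 0), ?_⟩
  simp

lemma upper_mem (a b c t : ℕ) :
    ((X 2 - C ((0 : ℕ) : k) * X 0) * (X 2 - C ((1 : ℕ) : k) * X 0)
      * (X 2 - C ((2 : ℕ) : k) * X 0)) ^ t ∈ symbolicPower k (std3 k a b c) t := by
  rw [mem_symb]
  set L0 : MvPolynomial (Fin 3) k := X 2 - C ((0 : ℕ) : k) * X 0 with hL0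
  set L1 : MvPolynomial (Fin 3) k := X 2 - C ((1 : ℕ) : k) * X 0 with hL1
  set L2 : MvPolynomial (Fin 3) k := X 2 - C ((2 : ℕ) : k) * X 0 with hL2
  rintro P ((⟨j, hj, rfl⟩ | ⟨j, hj, rfl⟩) | ⟨j, hj, rfl⟩)
  · rw [show (L0 * L1 * L2) ^ t = (L0 ^ t * L1 ^ t) * L2 ^ t by rw [mul_pow, mul_pow]]
    exact Ideal.mul_mem_left _ _ (Ideal.pow_mem_pow (hL2 ▸ L_mem_point _ _) t)
  · rw [show (L0 * L1 * L2) ^ t = (L0 ^ t * L2 ^ t) * L1 ^ t by rw [mul_pow, mul_pow]; ring]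
    exact Ideal.mul_mem_left _ _ (Ideal.pow_mem_pow (hL1 ▸ L_mem_point _ _) t)
  · rw [show (L0 * L1 * L2) ^ t = (L1 ^ t * L2 ^ t) * L0 ^ t by rw [mul_pow, mul_pow]; ring]
    exact Ideal.mul_mem_left _ _ (Ideal.pow_mem_pow (hL0 ▸ L_mem_point _ _) t)

lemma initDeg_symb [CharZero k] {a b c : ℕ} (ha : 3 ≤ a) (hb : 3 ≤ b) (hc : 3 ≤ c) (t : ℕ) :
    initDeg k (symbolicPower k (std3 k a b c) t) = 3 * t := by
  have hFne : (((X 2 - C ((0 : ℕ) : k) * X 0) * (X 2 - C ((1 : ℕ) : k) * X 0)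
      * (X 2 - C ((2 : ℕ) : k) * X 0)) ^ t : MvPolynomial (Fin 3) k) ≠ 0 :=
    pow_ne_zero _ (mul_ne_zero (mul_ne_zero (L_ne_zero _) (L_ne_zero _)) (L_ne_zero _))
  have hFhom : ((((X 2 - C ((0 : ℕ) : k) * X 0) * (X 2 - C ((1 : ℕ) : k) * X 0)
      * (X 2 - C ((2 : ℕ) : k) * X 0)) ^ t : MvPolynomial (Fin 3) k)).IsHomogeneous (3 * t) := by
    have h1 : (X 2 - C ((0 : ℕ) : k) * X 0 : MvPolynomial (Fin 3) k).IsHomogeneous 1 :=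
      (isHomogeneous_X k 2).sub (isHomogeneous_C_mul_X _ 0)
    have h2 : (X 2 - C ((1 : ℕ) : k) * X 0 : MvPolynomial (Fin 3) k).IsHomogeneous 1 :=
      (isHomogeneous_X k 2).sub (isHomogeneous_C_mul_X _ 0)
    have h3 : (X 2 - C ((2 : ℕ) : k) * X 0 : MvPolynomial (Fin 3) k).IsHomogeneous 1 :=
      (isHomogeneous_X k 2).sub (isHomogeneous_C_mul_X _ 0)
    have hpow := ((h1.mul h2).mul h3).pow t
    have h3t : (1 + 1 + 1) * t = 3 * t := by ring
    rw [h3t] at hpow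
    exact hpow
  have hmem3 : (3 * t) ∈ {d | ∃ f ∈ symbolicPower k (std3 k a b c) t, f ≠ 0 ∧ f.IsHomogeneous d} :=
    ⟨_, upper_mem a b c t, hFne, hFhom⟩
  apply le_antisymm
  · exact Nat.sInf_le hmem3
  · obtain ⟨f, hfI, hfne, hfhom⟩ := Nat.sInf_mem (⟨3 * t, hmem3⟩ :
      Set.Nonempty {d | ∃ f ∈ symbolicPower k (std3 k a b c) t, f ≠ 0 ∧ f.IsHomogeneous d})
    exact lower_bound ha hb hc t _ f hfne hfhom hfI

end Wald


/-- a standard k-configuration of type `(a,b,c)` with `3 ≤ a < b < c` has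
Waldschmidt constant `3`, and satisfies Chudnovsky's inequality
`α(I_X^{(m)})/m ≥ (α(I_X)+1)/2` for all `m > 0`. -/
theorem waldschmidt_std_abc_and_chudnovsky (k : Type) [Field k] [IsAlgClosed k] [CharZero k]
    (a b c : ℕ) (ha : 3 ≤ a) (hab : a < b) (hbc : b < c) :
    waldIs k (std3 k a b c) 3 ∧
      ∀ m : ℕ, 0 < m →
        ((initDeg k (symbolicPower k (std3 k a b c) 1) : ℝ) + 1) / 2 ≤
          (initDeg k (symbolicPower k (std3 k a b c) m) : ℝ) / m := by
  have hb : 3 ≤ b := by omega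
  have hc : 3 ≤ c := by omega
  have hinit : ∀ t, initDeg k (symbolicPower k (std3 k a b c) t) = 3 * t :=
    fun t => Wald.initDeg_symb ha hb hc t
  constructor
  · rw [waldIs]
    apply Filter.Tendsto.congr' _ (tendsto_const_nhds (x := (3 : ℝ)) (f := Filter.atTop))
    filter_upwards [Filter.eventually_ge_atTop 1] with t ht
    rw [hinit t]
    have htne : (t : ℝ) ≠ 0 := Nat.cast_ne_zero.mpr (by omega)
    push_cast
    rw [mul_div_assoc, div_self htne, mul_one]
  · intro m hm
    rw [hinit 1, hinit m]
    have hmne : (m : ℝ) ≠ 0 := Nat.cast_ne_zero.mpr (by omega)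
    push_cast
    rw [mul_div_assoc, div_self hmne, mul_one]
    norm_num
end
end
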